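/- arXiv:1701.07206 — 3 statements merged into one kernel-verified Lean document; each statement's English description precedes it below -/
import Mathlib

section
/- Let r, k be positive integers and p a prime with p > 2k²r². Then there exists a set S ⊆ {0,1,…,p−1} of size k that contains no r-weighted arithmetic progression modulo p. -/
/-- A set `S` of integers contains no `r`-weighted arithmetic progression modulo `p` if there
do not exist pairwise distinct `s₁, s₂, s₃ ∈ S` and integers `x, y` with `0 < x`, `0 < y` and
`x + y ≤ r - 1` such that `x·s₁ + y·s₂ ≡ (x+y)·s₃ (mod p)`. -/
def NoWeightedAP (r p : ℕ) (S : Set ℕ) : Prop :=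
  ¬ ∃ s1 ∈ S, ∃ s2 ∈ S, ∃ s3 ∈ S, ∃ x y : ℕ,
      s1 ≠ s2 ∧ s1 ≠ s3 ∧ s2 ≠ s3 ∧ 0 < x ∧ 0 < y ∧ x + y ≤ r - 1 ∧
      (x * s1 + y * s2) % p = ((x + y) * s3) % p

lemma aux_cast_ne_zero (p a : ℕ) [NeZero p] (h0 : 0 < a) (hlt : a < p) :
    (a : ZMod p) ≠ 0 := by
  rw [Ne, ZMod.natCast_eq_zero_iff]
  intro hdvd
  exact absurd (Nat.le_of_dvd h0 hdvd) (not_le.2 hlt)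

/-- Solves for the third element given the first two and the weights. -/
noncomputable def auxF3 (p : ℕ) (t : ℕ × ℕ × ℕ × ℕ) : ℕ :=
  ((((t.2.2.1 + t.2.2.2 : ℕ) : ZMod p))⁻¹ *
    ((t.2.2.1 : ZMod p) * (t.1 : ZMod p) + (t.2.2.2 : ZMod p) * (t.2.1 : ZMod p))).val

/-- Solves for the first element given the other two and the weights. -/
noncomputable def auxF1 (p : ℕ) (t : ℕ × ℕ × ℕ × ℕ) : ℕ :=
  (((t.2.2.1 : ZMod p))⁻¹ *
    (((t.2.2.1 + t.2.2.2 : ℕ) : ZMod p) * (t.2.1 : ZMod p) -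
      (t.2.2.2 : ZMod p) * (t.1 : ZMod p))).val

/-- For `r, k ≥ 1` and a prime `p > 2k²r²`, there is a set
`S ⊆ {0,1,…,p-1}` of size `k` containing no `r`-weighted arithmetic progression
modulo `p`. -/
theorem stmt16 (r k p : ℕ) (hr : 0 < r) (hk : 0 < k) (hp : p.Prime)
    (hbig : 2 * k ^ 2 * r ^ 2 < p) :
    ∃ S : Finset ℕ, S.card = k ∧ (∀ x ∈ S, x < p) ∧ NoWeightedAP r p ↑S := by
  haveI : Fact p.Prime := ⟨hp⟩
  have hrp : r < p := by
    calc r ≤ r ^ 2 := Nat.le_self_pow (by norm_num) r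
      _ ≤ 2 * k ^ 2 * r ^ 2 := Nat.le_mul_of_pos_left _ (by positivity)
      _ < p := hbig
  have key : ∀ m, m ≤ k → ∃ S : Finset ℕ, S.card = m ∧ (∀ x ∈ S, x < p) ∧ NoWeightedAP r p ↑S := by
    intro m
    induction m with
    | zero =>
      intro _
      refine ⟨∅, by simp, by simp, ?_⟩
      simp [NoWeightedAP]
    | succ m ih =>
      intro hmk
      obtain ⟨S, hcard, hlt, hnap⟩ := ih (le_trans (Nat.le_succ m) hmk)
      classical
      set W : Finset (ℕ × ℕ) := Finset.Ico 1 r ×ˢ Finset.Ico 1 r with hWdef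
      set T : Finset (ℕ × ℕ × ℕ × ℕ) := S ×ˢ S ×ˢ W with hTdef
      set B : Finset ℕ := S ∪ T.image (auxF3 p) ∪ T.image (auxF1 p) with hBdef
      have hTcard : T.card = m * (m * ((r - 1) * (r - 1))) := by
        simp [hTdef, hWdef, Finset.card_product, hcard, Nat.card_Ico]
      have hBcard : B.card < p := by
        have h1 : B.card ≤ S.card + T.card + T.card := by
          calc B.card ≤ (S ∪ T.image (auxF3 p)).card + (T.image (auxF1 p)).card :=
                Finset.card_union_le _ _
            _ ≤ S.card + (T.image (auxF3 p)).card + (T.image (auxF1 p)).card :=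
                Nat.add_le_add_right (Finset.card_union_le _ _) _
            _ ≤ S.card + T.card + T.card :=
                Nat.add_le_add (Nat.add_le_add_left (Finset.card_image_le) _)
                  (Finset.card_image_le)
        rw [hcard, hTcard] at h1
        have hm1 : m + 1 ≤ k := hmk
        obtain ⟨a, rfl⟩ : ∃ a, r = a + 1 := ⟨r - 1, by omega⟩
        have hsub : a + 1 - 1 = a := by omega
        rw [hsub] at h1
        have hk2 : (m + 1) ^ 2 ≤ k ^ 2 := Nat.pow_le_pow_left hm1 2
        have : m + m * (m * (a * a)) + m * (m * (a * a)) < 2 * k ^ 2 * (a + 1) ^ 2 := by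
          have step1 : m + m * (m * (a * a)) + m * (m * (a * a)) <
              2 * (m + 1) ^ 2 * (a + 1) ^ 2 := by nlinarith [Nat.zero_le m, Nat.zero_le a]
          have step2 : 2 * (m + 1) ^ 2 * (a + 1) ^ 2 ≤ 2 * k ^ 2 * (a + 1) ^ 2 := by
            have := Nat.mul_le_mul_right ((a + 1) ^ 2) (Nat.mul_le_mul_left 2 hk2)
            simpa using this
          omega
        omega
      have hex : (Finset.range p \ B).Nonempty := by
        rw [← Finset.card_pos]
        have := Finset.le_card_sdiff B (Finset.range p)
        rw [Finset.card_range] at this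
        omega
      obtain ⟨s, hs⟩ := hex
      rw [Finset.mem_sdiff, Finset.mem_range] at hs
      obtain ⟨hsp, hsB⟩ := hs
      have hsS : s ∉ S := fun h =>
        hsB (Finset.mem_union_left _ (Finset.mem_union_left _ h))
      have hsf3 : s ∉ T.image (auxF3 p) := fun h =>
        hsB (Finset.mem_union_left _ (Finset.mem_union_right _ h))
      have hsf1 : s ∉ T.image (auxF1 p) := fun h => hsB (Finset.mem_union_right _ h)
      refine ⟨insert s S, by rw [Finset.card_insert_of_notMem hsS, hcard], ?_, ?_⟩
      · intro x hx
        rcases Finset.mem_insert.1 hx with rfl | hx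
        · exact hsp
        · exact hlt x hx
      · rintro ⟨s1, hs1, s2, hs2, s3, hs3, x, y, h12, h13, h23, hx, hy, hxy, heq⟩
        rw [Finset.mem_coe, Finset.mem_insert] at hs1 hs2 hs3
        have hr3 : 3 ≤ r := by omega
        have hxr : x < r := by omega
        have hyr : y < r := by omega
        have hxp : x < p := lt_trans hxr hrp
        have hyp : y < p := lt_trans hyr hrp
        have hxyp : x + y < p := by omega
        have hz : ((x : ZMod p) * (s1 : ZMod p) + (y : ZMod p) * (s2 : ZMod p)) =
            ((x + y : ℕ) : ZMod p) * (s3 : ZMod p) := by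
          have h := (ZMod.natCast_eq_natCast_iff' (x * s1 + y * s2) ((x + y) * s3) p).2 heq
          push_cast at h ⊢
          linear_combination h
        rcases hs3 with he3 | hs3
        · -- the new element plays role 3
          rw [he3] at hz h13 h23
          have hs1' : s1 ∈ S := hs1.resolve_left h13
          have hs2' : s2 ∈ S := hs2.resolve_left h23
          apply hsf3
          refine Finset.mem_image.2 ⟨(s1, s2, x, y), ?_, ?_⟩
          · simp [hTdef, hWdef, Finset.mem_Ico, hs1', hs2', hx, hy, hxr, hyr]
            omega
          · have hne : ((x + y : ℕ) : ZMod p) ≠ 0 :=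
              aux_cast_ne_zero p (x + y) (by omega) hxyp
            show ((((x + y : ℕ) : ZMod p))⁻¹ *
              ((x : ZMod p) * (s1 : ZMod p) + (y : ZMod p) * (s2 : ZMod p))).val = s
            rw [hz, inv_mul_cancel_left₀ hne, ZMod.val_cast_of_lt hsp]
        rcases hs1 with he1 | hs1
        · -- the new element plays role 1
          rw [he1] at hz h12 h13
          have hs2' : s2 ∈ S := hs2.resolve_left (Ne.symm h12)
          apply hsf1
          refine Finset.mem_image.2 ⟨(s2, s3, x, y), ?_, ?_⟩
          · simp [hTdef, hWdef, Finset.mem_Ico, hs2', hs3, hx, hy, hxr, hyr]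
            omega
          · have hne : ((x : ℕ) : ZMod p) ≠ 0 := aux_cast_ne_zero p x hx hxp
            show ((((x : ℕ) : ZMod p))⁻¹ *
              (((x + y : ℕ) : ZMod p) * (s3 : ZMod p) - (y : ZMod p) * (s2 : ZMod p))).val = s
            have hrw : ((x + y : ℕ) : ZMod p) * (s3 : ZMod p) - (y : ZMod p) * (s2 : ZMod p)
                = (x : ZMod p) * (s : ZMod p) := by linear_combination - hz
            rw [hrw, inv_mul_cancel_left₀ hne, ZMod.val_cast_of_lt hsp]
        rcases hs2 with he2 | hs2
        · -- the new element plays role 2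
          rw [he2] at hz h12 h23
          apply hsf1
          refine Finset.mem_image.2 ⟨(s1, s3, y, x), ?_, ?_⟩
          · simp [hTdef, hWdef, Finset.mem_Ico, hs1, hs3, hx, hy, hxr, hyr]
            omega
          · have hne : ((y : ℕ) : ZMod p) ≠ 0 := aux_cast_ne_zero p y hy hyp
            show ((((y : ℕ) : ZMod p))⁻¹ *
              (((y + x : ℕ) : ZMod p) * (s3 : ZMod p) - (x : ZMod p) * (s1 : ZMod p))).val = s
            have hrw : ((y + x : ℕ) : ZMod p) * (s3 : ZMod p) - (x : ZMod p) * (s1 : ZMod p)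
                = (y : ZMod p) * (s : ZMod p) := by
              push_cast at hz ⊢
              linear_combination - hz
            rw [hrw, inv_mul_cancel_left₀ hne, ZMod.val_cast_of_lt hsp]
        · exact hnap ⟨s1, hs1, s2, hs2, s3, hs3, x, y, h12, h13, h23, hx, hy, hxy, heq⟩
  obtain ⟨S, h1, h2, h3⟩ := key k le_rfl
  exact ⟨S, h1, h2, h3⟩
end

section
/- For all positive integers r and k, let p be the smallest prime satisfying p > 2k²r². Then there exists a binary (r,k)-batch code of dimension n = rp, length rp + kp, and redundancy kp; in particular its rate is r/(r+k). -/
open Finset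

open Finset

noncomputable def boxI (R : ℤ) : Finset (ℤ × ℤ) := (Finset.Icc 1 R) ×ˢ (Finset.Icc 1 R)

noncomputable def LLset (R : ℤ) : Finset (ℤ × ℤ) := (boxI R).filter (fun q => q.1 < q.2)

noncomputable def NEset (R : ℤ) : Finset (ℤ × ℤ) := (boxI R).filter (fun q => q.1 ≠ q.2)

lemma boxI_card (R : ℕ) : (boxI (R:ℤ)).card = R * R := by
  rw [boxI, Finset.card_product, Int.card_Icc]
  simp

lemma NEset_card (R : ℕ) : (NEset (R:ℤ)).card = R * R - R := by
  classical
  have h2 : ((boxI (R:ℤ)).filter (fun q => q.1 = q.2)).card = R := by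
    have he : (boxI (R:ℤ)).filter (fun q => q.1 = q.2)
        = (Finset.Icc (1:ℤ) (R:ℤ)).image (fun a => (a,a)) := by
      ext q
      simp only [boxI, Finset.mem_filter, Finset.mem_product, Finset.mem_image, Finset.mem_Icc]
      constructor
      · rintro ⟨⟨h1, _⟩, h3⟩
        exact ⟨q.1, h1, Prod.ext rfl h3⟩
      · rintro ⟨a, ha, rfl⟩
        exact ⟨⟨ha, ha⟩, rfl⟩
    rw [he, Finset.card_image_of_injective _ (fun a b h => (Prod.ext_iff.1 h).1),
      Int.card_Icc]
    simp
  have h3 := Finset.card_filter_add_card_filter_not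
    (s := boxI (R:ℤ)) (p := fun q => q.1 = q.2)
  have hb := boxI_card R
  have hRR : R ≤ R * R := by nlinarith
  have hne : NEset (R:ℤ) = (boxI (R:ℤ)).filter (fun a => ¬ a.1 = a.2) := rfl
  rw [hne]
  omega

lemma LLset_card (R : ℕ) : (LLset (R:ℤ)).card * 2 = R * R - R := by
  classical
  have himg : (LLset (R:ℤ)).image Prod.swap = (boxI (R:ℤ)).filter (fun q => q.2 < q.1) := by
    ext q
    simp only [LLset, boxI, Finset.mem_image, Finset.mem_filter, Finset.mem_product,
      Finset.mem_Icc, Prod.exists]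
    constructor
    · rintro ⟨a, b, ⟨⟨h1, h2⟩, h3⟩, rfl⟩
      exact ⟨⟨h2, h1⟩, h3⟩
    · rintro ⟨⟨h1, h2⟩, h3⟩
      exact ⟨q.2, q.1, ⟨⟨h2, h1⟩, h3⟩, rfl⟩
  have hinj : ((LLset (R:ℤ)).image Prod.swap).card = (LLset (R:ℤ)).card :=
    Finset.card_image_of_injective _ Prod.swap_injective
  have hdisj : Disjoint (LLset (R:ℤ)) ((boxI (R:ℤ)).filter (fun q => q.2 < q.1)) := by
    simp only [Finset.disjoint_left, LLset, Finset.mem_filter]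
    rintro q ⟨_, h⟩ ⟨_, h'⟩
    omega
  have hunion : (LLset (R:ℤ)) ∪ ((boxI (R:ℤ)).filter (fun q => q.2 < q.1)) = NEset (R:ℤ) := by
    simp only [LLset, NEset, ← Finset.filter_or]
    apply Finset.filter_congr
    intro q _
    constructor
    · rintro (h | h) <;> omega
    · intro h
      omega
  have hcu := Finset.card_union_of_disjoint hdisj
  rw [hunion, NEset_card] at hcu
  rw [himg] at hinj
  omega

/-- canonical parameter set for the slope-avoidance counting -/
noncomputable def Pset (R : ℤ) : Finset (ℤ × ℤ) :=
  ((Finset.Icc 1 R) ×ˢ (Finset.Icc (-R) R)).filter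
    (fun q => q.2 ≠ 0 ∧ q.1 + q.2 ≠ 0 ∧ |q.1 + q.2| ≤ R ∧ ¬((2:ℤ) ∣ q.1 ∧ (2:ℤ) ∣ q.2))

lemma LL_even_card (R : ℕ) :
    ((LLset (R:ℤ)).filter (fun q => (2:ℤ) ∣ q.1 ∧ (2:ℤ) ∣ q.2)).card = (LLset ((R/2 : ℕ):ℤ)).card := by
  classical
  have hmod := Nat.div_add_mod R 2
  have hlt := Nat.mod_lt R (show 0 < 2 by norm_num)
  set m := R / 2 with hm
  have he : (LLset (R:ℤ)).filter (fun q => (2:ℤ) ∣ q.1 ∧ (2:ℤ) ∣ q.2)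
      = (LLset (m:ℤ)).image (fun q => (2 * q.1, 2 * q.2)) := by
    ext q
    simp only [LLset, boxI, Finset.mem_filter, Finset.mem_product, Finset.mem_image,
      Finset.mem_Icc, Prod.exists]
    constructor
    · rintro ⟨⟨⟨h1, h2⟩, h3⟩, ⟨x, hx⟩, ⟨y, hy⟩⟩
      refine ⟨x, y, ⟨⟨⟨by omega, by omega⟩, by omega⟩, by omega⟩, ?_⟩
      rw [Prod.ext_iff]
      constructor <;> simp <;> omega
    · rintro ⟨x, y, ⟨⟨⟨h1, h2⟩, h3⟩, h4⟩, rfl⟩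
      refine ⟨⟨⟨by omega, by omega⟩, by omega⟩, ⟨x, rfl⟩, ⟨y, rfl⟩⟩
  rw [he]
  apply Finset.card_image_of_injective
  rintro ⟨a, b⟩ ⟨c, d⟩ h
  rw [Prod.ext_iff] at h ⊢
  simp at h ⊢
  omega

lemma NE_even_card (R : ℕ) :
    ((NEset (R:ℤ)).filter (fun q => (2:ℤ) ∣ q.1 ∧ (2:ℤ) ∣ q.2)).card = (NEset ((R/2 : ℕ):ℤ)).card := by
  classical
  have hmod := Nat.div_add_mod R 2
  have hlt := Nat.mod_lt R (show 0 < 2 by norm_num)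
  set m := R / 2 with hm
  have he : (NEset (R:ℤ)).filter (fun q => (2:ℤ) ∣ q.1 ∧ (2:ℤ) ∣ q.2)
      = (NEset (m:ℤ)).image (fun q => (2 * q.1, 2 * q.2)) := by
    ext q
    simp only [NEset, boxI, Finset.mem_filter, Finset.mem_product, Finset.mem_image,
      Finset.mem_Icc, Prod.exists]
    constructor
    · rintro ⟨⟨⟨h1, h2⟩, h3⟩, ⟨x, hx⟩, ⟨y, hy⟩⟩
      refine ⟨x, y, ⟨⟨⟨by omega, by omega⟩, by omega⟩, by omega⟩, ?_⟩
      rw [Prod.ext_iff]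
      constructor <;> simp <;> omega
    · rintro ⟨x, y, ⟨⟨⟨h1, h2⟩, h3⟩, h4⟩, rfl⟩
      refine ⟨⟨⟨by omega, by omega⟩, by omega⟩, ⟨x, rfl⟩, ⟨y, rfl⟩⟩
  rw [he]
  apply Finset.card_image_of_injective
  rintro ⟨a, b⟩ ⟨c, d⟩ h
  rw [Prod.ext_iff] at h ⊢
  simp at h ⊢
  omega

lemma Pset_card_bound (R : ℕ) :
    (Pset (R:ℤ)).card * 2 ≤ 3 * ((R * R - R) - (R/2 * (R/2) - R/2)) := by
  classical
  set m := R / 2 with hm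
  have hmR : m ≤ R := Nat.div_le_self R 2
  have hsplit := Finset.card_filter_add_card_filter_not
    (s := Pset (R:ℤ)) (p := fun q => 0 < q.2)
  -- positive part injects into LLset minus both-even
  have hpos : ((Pset (R:ℤ)).filter (fun q => 0 < q.2)).card
      ≤ ((LLset (R:ℤ)).filter (fun q => ¬((2:ℤ) ∣ q.1 ∧ (2:ℤ) ∣ q.2))).card := by
    apply Finset.card_le_card_of_injOn (fun q => (q.1, q.1 + q.2))
    · rintro ⟨a, g⟩ hq
      simp only [Finset.mem_coe, Pset, Finset.mem_filter, Finset.mem_product, Finset.mem_Icc] at hq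
      obtain ⟨⟨⟨⟨ha1, ha2⟩, hg1, hg2⟩, hgne, hagne, habs, hev⟩, hgpos⟩ := hq
      rw [abs_le] at habs
      simp only [Finset.mem_coe, LLset, boxI, Finset.mem_filter, Finset.mem_product, Finset.mem_Icc]
      refine ⟨⟨⟨⟨ha1, ha2⟩, by omega, by omega⟩, by omega⟩, ?_⟩
      intro ⟨h2a, h2s⟩
      exact hev ⟨h2a, (Int.dvd_add_right h2a).mp h2s⟩
    · rintro ⟨a, g⟩ _ ⟨a', g'⟩ _ h
      rw [Prod.ext_iff] at h ⊢
      simp only at h ⊢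
      omega
  -- negative part injects into NEset minus both-even
  have hneg : ((Pset (R:ℤ)).filter (fun q => ¬ 0 < q.2)).card
      ≤ ((NEset (R:ℤ)).filter (fun q => ¬((2:ℤ) ∣ q.1 ∧ (2:ℤ) ∣ q.2))).card := by
    apply Finset.card_le_card_of_injOn (fun q => (q.1, -q.2))
    · rintro ⟨a, g⟩ hq
      simp only [Finset.mem_coe, Pset, Finset.mem_filter, Finset.mem_product, Finset.mem_Icc] at hq
      obtain ⟨⟨⟨⟨ha1, ha2⟩, hg1, hg2⟩, hgne, hagne, habs, hev⟩, hgpos⟩ := hq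
      rw [abs_le] at habs
      simp only [Finset.mem_coe, NEset, boxI, Finset.mem_filter, Finset.mem_product, Finset.mem_Icc]
      refine ⟨⟨⟨⟨ha1, ha2⟩, by omega, by omega⟩, by omega⟩, ?_⟩
      intro ⟨h2a, h2s⟩
      exact hev ⟨h2a, (dvd_neg).mp h2s⟩
    · rintro ⟨a, g⟩ _ ⟨a', g'⟩ _ h
      rw [Prod.ext_iff] at h ⊢
      simp only at h ⊢
      omega
  have hLL := Finset.card_filter_add_card_filter_not
    (s := LLset (R:ℤ)) (p := fun q => (2:ℤ) ∣ q.1 ∧ (2:ℤ) ∣ q.2)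
  have hNE := Finset.card_filter_add_card_filter_not
    (s := NEset (R:ℤ)) (p := fun q => (2:ℤ) ∣ q.1 ∧ (2:ℤ) ∣ q.2)
  have h1 := LLset_card R
  have h2 := NEset_card R
  have h3 := LLset_card m
  have h4 := NEset_card m
  have h5 := LL_even_card R
  have h6 := NE_even_card R
  rw [← hm] at h5 h6
  have hm2 : m * m ≤ R * R := Nat.mul_le_mul hmR hmR
  omega

open Finset

lemma pairs_card_bound (m : ℕ) :
    ((Finset.univ : Finset (Fin m × Fin m)).filter (fun bc => bc.1 < bc.2)).card * 2 ≤ m * m := by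
  classical
  have himg : ((Finset.univ : Finset (Fin m × Fin m)).filter (fun bc => bc.1 < bc.2)).image Prod.swap
      = (Finset.univ : Finset (Fin m × Fin m)).filter (fun bc => bc.2 < bc.1) := by
    ext q
    simp only [Finset.mem_image, Finset.mem_filter, Finset.mem_univ, true_and, Prod.exists]
    constructor
    · rintro ⟨a, b, hab, rfl⟩
      exact hab
    · intro h
      exact ⟨q.2, q.1, h, rfl⟩
  have hinj := Finset.card_image_of_injective
    ((Finset.univ : Finset (Fin m × Fin m)).filter (fun bc => bc.1 < bc.2)) Prod.swap_injective
  have hdisj : Disjoint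
      ((Finset.univ : Finset (Fin m × Fin m)).filter (fun bc => bc.1 < bc.2))
      ((Finset.univ : Finset (Fin m × Fin m)).filter (fun bc => bc.2 < bc.1)) := by
    simp only [Finset.disjoint_left, Finset.mem_filter, Finset.mem_univ, true_and]
    intro q h h'
    omega
  have hsub := Finset.card_le_card (Finset.subset_univ
    (((Finset.univ : Finset (Fin m × Fin m)).filter (fun bc => bc.1 < bc.2)) ∪
     ((Finset.univ : Finset (Fin m × Fin m)).filter (fun bc => bc.2 < bc.1))))
  rw [Finset.card_union_of_disjoint hdisj] at hsub
  have hcard : (Finset.univ : Finset (Fin m × Fin m)).card = m * m := by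
    simp [Finset.card_univ]
  rw [himg] at hinj
  omega

lemma helpA (R R2 : ℤ) (h0 : 0 ≤ R - 2*R2) (h1 : R - 2*R2 ≤ 1) (h2 : 0 ≤ R2) :
    4 * ((R*R - R) - (R2*R2 - R2)) ≤ 3*(R*R) := by
  nlinarith [mul_nonneg (by linarith : (0:ℤ) ≤ 1 - (R - 2*R2)) h2, sq_nonneg (R - 2*R2)]

lemma helpB (x y : ℤ) (hx : 1 ≤ x) (hy : 1 ≤ y) :
    16*(x-1) + 27*(y*y*((x-1)*(x-1))) ≤ 32*x^2*y^2 := by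
  have g1 : (x-1)*(x-1) ≤ x*x := by nlinarith
  have g2 : (0:ℤ) ≤ y*y := by positivity
  have g3 : y*y * ((x-1)*(x-1)) ≤ y*y*(x*x) := mul_le_mul_of_nonneg_left g1 g2
  have h5 : 0 < 5*(x*x) - 16*x + 16 := by nlinarith [sq_nonneg (x - 2)]
  have h6 : (1:ℤ) ≤ y*y := by nlinarith
  have g4 : 16*(x-1) ≤ 5 * (y*y) * (x*x) := by
    nlinarith [mul_le_mul_of_nonneg_right h6 (by nlinarith : (0:ℤ) ≤ 5*(x*x))]
  nlinarith [g3, g4]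

set_option maxHeartbeats 1000000 in
lemma main_arith (r k m t Pc : ℕ) (hm : m < k) (hr : 0 < r)
    (h2t : 2 * t ≤ m * m)
    (hP : 2 * Pc ≤ 3 * (((r-1) * (r-1) - (r-1)) - ((r-1)/2 * ((r-1)/2) - (r-1)/2))) :
    m + Pc * (m * m) + Pc * t ≤ 2 * k^2 * r^2 := by
  have hk0 : 0 < k := by omega
  set R := r - 1 with hR
  set R2 := (r-1)/2 with hR2
  rcases Nat.eq_zero_or_pos R with h0 | hRpos
  · rw [h0] at hP
    simp at hP
    have hPc : Pc = 0 := by omega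
    subst hPc
    simp only [Nat.zero_mul, Nat.mul_zero, Nat.add_zero]
    have h1 : 1 ≤ r^2 := Nat.one_le_pow _ _ hr
    have h2 : k ≤ k^2 := by nlinarith
    nlinarith
  · have hRsq : R ≤ R * R := Nat.le_mul_of_pos_left R hRpos
    have hR2R : R2 < R := by
      have hq : R2 = R / 2 := by omega
      rw [hq]
      exact Nat.div_lt_self hRpos one_lt_two
    have hR2sq' : R2 ≤ R2 * R2 := by
      rcases Nat.eq_zero_or_pos R2 with h | h
      · simp [h]
      · exact Nat.le_mul_of_pos_left R2 h
    have hBA : R2 * R2 - R2 ≤ R * R - R := by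
      have c3 : R2 * R + R ≤ R * R + R2 := by
        have : (R2 + 1) * R ≤ R * R := Nat.mul_le_mul_right R (by omega)
        nlinarith
      have c1 : R2 * R2 ≤ R2 * R := Nat.mul_le_mul_left R2 hR2R.le
      omega
    zify [hRsq, hR2sq', hBA] at hP
    zify
    set A : ℤ := (((R:ℤ) * R - R) - ((R2:ℤ) * R2 - R2)) with hA
    have hd0 : (0:ℤ) ≤ (R:ℤ) - 2 * R2 := by omega
    have hd1 : (R:ℤ) - 2 * R2 ≤ 1 := by omega
    have hR20 : (0:ℤ) ≤ (R2:ℤ) := by positivity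
    have hm0 : (0:ℤ) ≤ (m:ℤ) := by positivity
    have hPc0 : (0:ℤ) ≤ (Pc:ℤ) := by positivity
    have hmk : (m:ℤ) + 1 ≤ (k:ℤ) := by exact_mod_cast hm
    have hr1 : (1:ℤ) ≤ (r:ℤ) := by exact_mod_cast hr
    have hk1 : (1:ℤ) ≤ (k:ℤ) := by exact_mod_cast hk0
    have h2t' : 2 * (t:ℤ) ≤ (m:ℤ) * m := by exact_mod_cast h2t
    have hmm0 : (0:ℤ) ≤ (m:ℤ)*m := mul_nonneg hm0 hm0
    have hAnn : (0:ℤ) ≤ A := by rw [hA]; omega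
    have e3 := helpA (R:ℤ) (R2:ℤ) hd0 hd1 hR20
    rw [← hA] at e3
    have e2 : 2 * (Pc:ℤ) * ((m:ℤ)*m) ≤ 3 * A * ((m:ℤ)*m) := by
      have := mul_le_mul_of_nonneg_right hP (mul_nonneg hm0 hm0)
      linarith
    have e1 : 2 * ((Pc:ℤ) * t) ≤ (Pc:ℤ) * ((m:ℤ)*m) := by
      have := mul_le_mul_of_nonneg_left h2t' hPc0
      linarith
    have e4 : (m:ℤ)*m ≤ ((k:ℤ)-1)*((k:ℤ)-1) :=
      mul_self_le_mul_self hm0 (by linarith)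
    have hRle : (R:ℤ) ≤ (r:ℤ) := by omega
    have hR0' : (0:ℤ) ≤ (R:ℤ) := by positivity
    have F3 : 9 * (4 * A * ((m:ℤ)*m)) ≤ 9 * (3*((R:ℤ)*R) * ((m:ℤ)*m)) := by
      have := mul_le_mul_of_nonneg_right e3 hmm0
      linarith
    have F4 : (R:ℤ)*R * ((m:ℤ)*m) ≤ (R:ℤ)*R * (((k:ℤ)-1)*((k:ℤ)-1)) :=
      mul_le_mul_of_nonneg_left e4 (mul_nonneg hR0' hR0')
    have hRr2 : (R:ℤ)*R ≤ (r:ℤ)*r := mul_le_mul hRle hRle hR0' (by positivity)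
    have F5 : (R:ℤ)*R * (((k:ℤ)-1)*((k:ℤ)-1)) ≤ (r:ℤ)*r * (((k:ℤ)-1)*((k:ℤ)-1)) :=
      mul_le_mul_of_nonneg_right hRr2 (mul_self_nonneg _)
    have F7 := helpB (k:ℤ) (r:ℤ) hk1 hr1
    -- assemble linearly
    nlinarith [e1, e2, F3, F4, F5, F7, hmk, hPc0, hmm0]

/-! ### Existence of good slopes -/

/-- the triangle-freeness property of the slope vector `t` -/
def TProp (r p : ℕ) {k : ℕ} (t : Fin k → ZMod p) : Prop :=
  ∀ a b c : Fin k, a ≠ b → b ≠ c → a ≠ c →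
    ∀ α γ : ℤ, α ≠ 0 → γ ≠ 0 → α + γ ≠ 0 →
      |α| < (r:ℤ) → |γ| < (r:ℤ) → |α + γ| < (r:ℤ) →
      (α : ZMod p) * t a + (γ : ZMod p) * t c ≠ ((α + γ : ℤ) : ZMod p) * t b

lemma intCast_ne_zero_mod (p : ℕ) (α : ℤ) (h0 : α ≠ 0) (h : |α| < (p:ℤ)) :
    (α : ZMod p) ≠ 0 := by
  intro hc
  rw [ZMod.intCast_zmod_eq_zero_iff_dvd] at hc
  have := Int.le_of_dvd (abs_pos.mpr h0) ((dvd_abs _ _).mpr hc)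
  omega

noncomputable def badA (r p : ℕ) {m : ℕ} (t : Fin m → ZMod p) : Finset (ZMod p) :=
  ((Pset ((r-1 : ℕ):ℤ)) ×ˢ (Finset.univ : Finset (Fin m × Fin m))).image
    (fun q => (((q.1.1 + q.1.2 : ℤ) : ZMod p) * t q.2.1 - ((q.1.2 : ℤ) : ZMod p) * t q.2.2)
      * ((q.1.1 : ℤ) : ZMod p)⁻¹)

noncomputable def badB (r p : ℕ) {m : ℕ} (t : Fin m → ZMod p) : Finset (ZMod p) :=
  ((Pset ((r-1 : ℕ):ℤ)) ×ˢ ((Finset.univ : Finset (Fin m × Fin m)).filter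
      (fun bc => bc.1 < bc.2))).image
    (fun q => (((q.1.1 : ℤ) : ZMod p) * t q.2.1 + ((q.1.2 : ℤ) : ZMod p) * t q.2.2)
      * (((q.1.1 + q.1.2 : ℤ) : ZMod p))⁻¹)

section roles

variable {r p m : ℕ} [Fact p.Prime] (t : Fin m → ZMod p) (v : ZMod p)

/-- final step for role A: positive, canonical parameters -/
lemma roleA_final (hr : 0 < r) (hrp : (r:ℤ) ≤ (p:ℤ)) (α γ : ℤ) (hpos : 0 < α) (hev : ¬((2:ℤ) ∣ α ∧ (2:ℤ) ∣ γ))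
    (hγ : γ ≠ 0) (hs : α + γ ≠ 0) (hα1 : |α| < (r:ℤ)) (hγ1 : |γ| < (r:ℤ))
    (hs1 : |α + γ| < (r:ℤ)) (B C : Fin m)
    (heq : (α : ZMod p) * v + (γ : ZMod p) * t C = ((α + γ : ℤ) : ZMod p) * t B) :
    v ∈ badA r p t := by
  have hR : ((r - 1 : ℕ) : ℤ) = (r:ℤ) - 1 := by omega
  obtain ⟨ha1, ha2⟩ := abs_lt.mp hα1
  obtain ⟨hg1, hg2⟩ := abs_lt.mp hγ1
  obtain ⟨hs1a, hs1b⟩ := abs_lt.mp hs1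
  rw [badA, Finset.mem_image]
  refine ⟨((α, γ), (B, C)), ?_, ?_⟩
  · rw [Finset.mem_product]
    constructor
    · rw [Pset, Finset.mem_filter, Finset.mem_product, Finset.mem_Icc, Finset.mem_Icc]
      dsimp only
      refine ⟨⟨⟨by omega, by omega⟩, by omega, by omega⟩, hγ, hs, ?_, hev⟩
      rw [abs_le]
      constructor <;> omega
    · exact Finset.mem_univ _
  · have hα0 : ((α : ℤ) : ZMod p) ≠ 0 := by
      apply intCast_ne_zero_mod p α (by omega)
      rw [abs_lt] at hα1 ⊢
      omega
    dsimp only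
    rw [mul_inv_eq_iff_eq_mul₀ hα0]
    push_cast at heq ⊢
    linear_combination -heq

/-- final step for role B: positive & ordered canonical parameters -/
lemma roleB_final (hr : 0 < r) (hrp : (r:ℤ) ≤ (p:ℤ)) (α γ : ℤ) (hpos : 0 < α) (hev : ¬((2:ℤ) ∣ α ∧ (2:ℤ) ∣ γ))
    (hγ : γ ≠ 0) (hs : α + γ ≠ 0) (hα1 : |α| < (r:ℤ)) (hγ1 : |γ| < (r:ℤ))
    (hs1 : |α + γ| < (r:ℤ)) (X Y : Fin m) (hXY : X < Y)
    (heq : (α : ZMod p) * t X + (γ : ZMod p) * t Y = ((α + γ : ℤ) : ZMod p) * v) :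
    v ∈ badB r p t := by
  have hR : ((r - 1 : ℕ) : ℤ) = (r:ℤ) - 1 := by omega
  obtain ⟨ha1, ha2⟩ := abs_lt.mp hα1
  obtain ⟨hg1, hg2⟩ := abs_lt.mp hγ1
  obtain ⟨hs1a, hs1b⟩ := abs_lt.mp hs1
  rw [badB, Finset.mem_image]
  refine ⟨((α, γ), (X, Y)), ?_, ?_⟩
  · rw [Finset.mem_product]
    constructor
    · rw [Pset, Finset.mem_filter, Finset.mem_product, Finset.mem_Icc, Finset.mem_Icc]
      dsimp only
      refine ⟨⟨⟨by omega, by omega⟩, by omega, by omega⟩, hγ, hs, ?_, hev⟩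
      rw [abs_le]
      constructor <;> omega
    · rw [Finset.mem_filter]
      exact ⟨Finset.mem_univ _, hXY⟩
  · have hs0 : (((α + γ : ℤ)) : ZMod p) ≠ 0 := by
      apply intCast_ne_zero_mod p _ hs
      rw [abs_lt] at hs1 ⊢
      omega
    dsimp only
    rw [mul_inv_eq_iff_eq_mul₀ hs0]
    push_cast at heq ⊢
    linear_combination heq

end roles

section rolemem

variable {r p m : ℕ} [Fact p.Prime] {t : Fin m → ZMod p} {v : ZMod p}

lemma two_ne_zero_mod (hp2 : 2 < p) : (2 : ZMod p) ≠ 0 := by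
  have : ((2:ℤ) : ZMod p) ≠ 0 := by
    apply intCast_ne_zero_mod p 2 (by norm_num)
    rw [show |(2:ℤ)| = 2 by norm_num]
    exact_mod_cast hp2
  simpa using this

lemma roleA_mem (hr : 0 < r) (hrp : (r:ℤ) ≤ (p:ℤ)) (hp2 : 2 < p) :
    ∀ (n : ℕ) (α γ : ℤ), α.natAbs ≤ n → ∀ (B C : Fin m),
    α ≠ 0 → γ ≠ 0 → α + γ ≠ 0 →
    -(r:ℤ) < α → α < r → -(r:ℤ) < γ → γ < r → -(r:ℤ) < α + γ → α + γ < r →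
    ((α : ZMod p) * v + (γ : ZMod p) * t C = ((α + γ : ℤ) : ZMod p) * t B) →
    v ∈ badA r p t := by
  intro n
  induction n with
  | zero =>
    intro α γ hn B C hα _ _ _ _ _ _ _ _ _
    omega
  | succ n ih =>
    intro α γ hn B C hα hγ hs ha1 ha2 hg1 hg2 hs1 hs2 heq
    by_cases hev : ((2:ℤ) ∣ α ∧ (2:ℤ) ∣ γ)
    · obtain ⟨⟨α', rfl⟩, ⟨γ', rfl⟩⟩ := hev
      have h2 : (2 : ZMod p) ≠ 0 := two_ne_zero_mod hp2
      have heq' : (α' : ZMod p) * v + (γ' : ZMod p) * t C = ((α' + γ' : ℤ) : ZMod p) * t B := by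
        apply mul_left_cancel₀ h2
        push_cast at heq ⊢
        linear_combination heq
      exact ih α' γ' (by omega) B C (by omega) (by omega) (by omega)
        (by omega) (by omega) (by omega) (by omega) (by omega) (by omega) heq'
    · rcases lt_or_gt_of_ne hα with hneg | hpos
      · -- flip signs
        have hev' : ¬((2:ℤ) ∣ (-α) ∧ (2:ℤ) ∣ (-γ)) := by
          rw [dvd_neg, dvd_neg]
          exact hev
        have heq' : ((-α : ℤ) : ZMod p) * v + ((-γ : ℤ) : ZMod p) * t C
            = ((-α + -γ : ℤ) : ZMod p) * t B := by
          push_cast at heq ⊢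
          linear_combination -heq
        exact roleA_final t v hr hrp (-α) (-γ) (by omega) hev' (by omega) (by omega)
          (abs_lt.mpr ⟨by omega, by omega⟩) (abs_lt.mpr ⟨by omega, by omega⟩)
          (abs_lt.mpr ⟨by omega, by omega⟩) B C heq'
      · exact roleA_final t v hr hrp α γ hpos hev hγ hs
          (abs_lt.mpr ⟨by omega, by omega⟩) (abs_lt.mpr ⟨by omega, by omega⟩)
          (abs_lt.mpr ⟨by omega, by omega⟩) B C heq

lemma roleB_mem (hr : 0 < r) (hrp : (r:ℤ) ≤ (p:ℤ)) (hp2 : 2 < p) :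
    ∀ (n : ℕ) (α γ : ℤ), α.natAbs ≤ n → ∀ (X Y : Fin m), X ≠ Y →
    α ≠ 0 → γ ≠ 0 → α + γ ≠ 0 →
    -(r:ℤ) < α → α < r → -(r:ℤ) < γ → γ < r → -(r:ℤ) < α + γ → α + γ < r →
    ((α : ZMod p) * t X + (γ : ZMod p) * t Y = ((α + γ : ℤ) : ZMod p) * v) →
    v ∈ badB r p t := by
  intro n
  induction n with
  | zero =>
    intro α γ hn X Y _ hα _ _ _ _ _ _ _ _ _
    omega
  | succ n ih =>
    intro α γ hn X Y hXY hα hγ hs ha1 ha2 hg1 hg2 hs1 hs2 heq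
    by_cases hev : ((2:ℤ) ∣ α ∧ (2:ℤ) ∣ γ)
    · obtain ⟨⟨α', rfl⟩, ⟨γ', rfl⟩⟩ := hev
      have h2 : (2 : ZMod p) ≠ 0 := two_ne_zero_mod hp2
      have heq' : (α' : ZMod p) * t X + (γ' : ZMod p) * t Y
          = ((α' + γ' : ℤ) : ZMod p) * v := by
        apply mul_left_cancel₀ h2
        push_cast at heq ⊢
        linear_combination heq
      exact ih α' γ' (by omega) X Y hXY (by omega) (by omega) (by omega)
        (by omega) (by omega) (by omega) (by omega) (by omega) (by omega) heq'
    · rcases lt_or_gt_of_ne hXY with hord | hord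
      · -- X < Y : keep orientation, fix sign of α
        rcases lt_or_gt_of_ne hα with hneg | hpos
        · have hev' : ¬((2:ℤ) ∣ (-α) ∧ (2:ℤ) ∣ (-γ)) := by
            rw [dvd_neg, dvd_neg]; exact hev
          have heq' : ((-α : ℤ) : ZMod p) * t X + ((-γ : ℤ) : ZMod p) * t Y
              = ((-α + -γ : ℤ) : ZMod p) * v := by
            push_cast at heq ⊢
            linear_combination -heq
          exact roleB_final t v hr hrp (-α) (-γ) (by omega) hev' (by omega) (by omega)
            (abs_lt.mpr ⟨by omega, by omega⟩) (abs_lt.mpr ⟨by omega, by omega⟩)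
            (abs_lt.mpr ⟨by omega, by omega⟩) X Y hord heq'
        · exact roleB_final t v hr hrp α γ hpos hev hγ hs
            (abs_lt.mpr ⟨by omega, by omega⟩) (abs_lt.mpr ⟨by omega, by omega⟩)
            (abs_lt.mpr ⟨by omega, by omega⟩) X Y hord heq
      · -- Y < X : swap, fix sign of γ
        rcases lt_or_gt_of_ne hγ with hneg | hpos
        · have hev' : ¬((2:ℤ) ∣ (-γ) ∧ (2:ℤ) ∣ (-α)) := by
            rw [dvd_neg, dvd_neg]
            intro ⟨h1, h2⟩
            exact hev ⟨h2, h1⟩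
          have heq' : ((-γ : ℤ) : ZMod p) * t Y + ((-α : ℤ) : ZMod p) * t X
              = ((-γ + -α : ℤ) : ZMod p) * v := by
            push_cast at heq ⊢
            linear_combination -heq
          exact roleB_final t v hr hrp (-γ) (-α) (by omega) hev' (by omega) (by omega)
            (abs_lt.mpr ⟨by omega, by omega⟩) (abs_lt.mpr ⟨by omega, by omega⟩)
            (abs_lt.mpr ⟨by omega, by omega⟩) Y X hord heq'
        · have hev' : ¬((2:ℤ) ∣ γ ∧ (2:ℤ) ∣ α) := by
            intro ⟨h1, h2⟩
            exact hev ⟨h2, h1⟩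
          have heq' : ((γ : ℤ) : ZMod p) * t Y + ((α : ℤ) : ZMod p) * t X
              = ((γ + α : ℤ) : ZMod p) * v := by
            push_cast at heq ⊢
            linear_combination heq
          exact roleB_final t v hr hrp γ α hpos hev' hα (by omega)
            (abs_lt.mpr ⟨by omega, by omega⟩) (abs_lt.mpr ⟨by omega, by omega⟩)
            (abs_lt.mpr ⟨by omega, by omega⟩) Y X hord heq'

end rolemem

theorem exists_slopes (r k p : ℕ) (hr : 0 < r) (hk : 0 < k) (hp : p.Prime)
    (hbig : 2 * k ^ 2 * r ^ 2 < p) :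
    ∃ t : Fin k → ZMod p, Function.Injective t ∧ TProp r p t := by
  haveI : Fact p.Prime := ⟨hp⟩
  have hp2 : 2 < p := by nlinarith [Nat.one_le_pow 2 k hk, Nat.one_le_pow 2 r hr]
  have hrp : (r:ℤ) ≤ (p:ℤ) := by
    have : r ≤ 2 * k^2 * r^2 := by nlinarith [Nat.one_le_pow 2 k hk, hr]
    omega
  suffices h : ∀ m, m ≤ k → ∃ t : Fin m → ZMod p, Function.Injective t ∧ TProp r p t by
    exact h k le_rfl
  intro m
  induction m with
  | zero =>
    intro _
    exact ⟨Fin.elim0, fun a => a.elim0, fun a => a.elim0⟩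
  | succ m ih =>
    intro hm1
    obtain ⟨t, htinj, htT⟩ := ih (by omega)
    have hmk : m < k := by omega
    classical
    -- the bad set
    set Bad : Finset (ZMod p) :=
      (Finset.univ.image t) ∪ badA r p t ∪ badB r p t with hBad
    have hcardA : (badA r p t).card ≤ (Pset ((r-1:ℕ):ℤ)).card * (m * m) := by
      refine (Finset.card_image_le).trans ?_
      rw [Finset.card_product]
      apply Nat.mul_le_mul_left
      simp [Finset.card_univ]
    have hcardB : (badB r p t).card ≤ (Pset ((r-1:ℕ):ℤ)).card *
        (((Finset.univ : Finset (Fin m × Fin m)).filter (fun bc => bc.1 < bc.2)).card) := by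
      refine (Finset.card_image_le).trans ?_
      rw [Finset.card_product]
    have hpairs := pairs_card_bound m
    have hPb := Pset_card_bound (r-1)
    have harith := main_arith r k m
      (((Finset.univ : Finset (Fin m × Fin m)).filter (fun bc => bc.1 < bc.2)).card)
      ((Pset ((r-1:ℕ):ℤ)).card) hmk hr (by omega) (by omega)
    have hcard : Bad.card < p := by
      have h1 : Bad.card ≤ m + (Pset ((r-1:ℕ):ℤ)).card * (m*m) +
          (Pset ((r-1:ℕ):ℤ)).card *
          (((Finset.univ : Finset (Fin m × Fin m)).filter (fun bc => bc.1 < bc.2)).card) := by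
        rw [hBad]
        refine (Finset.card_union_le _ _).trans ?_
        have h2 := Finset.card_union_le (Finset.univ.image t) (badA r p t)
        have h3 : (Finset.univ.image t).card ≤ m := by
          refine (Finset.card_image_le).trans ?_
          simp [Finset.card_univ]
        omega
      omega
    -- pick a fresh value
    have hex : ∃ v : ZMod p, v ∉ Bad := by
      by_contra hc
      push_neg at hc
      have : (Finset.univ : Finset (ZMod p)) ⊆ Bad := fun v _ => hc v
      have := Finset.card_le_card this
      rw [Finset.card_univ, ZMod.card p] at this
      omega
    obtain ⟨v, hv⟩ := hex
    refine ⟨Fin.snoc t v, ?_, ?_⟩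
    · -- injectivity
      intro a b hab
      rcases Fin.eq_castSucc_or_eq_last a with ⟨a₀, rfl⟩ | rfl <;>
        rcases Fin.eq_castSucc_or_eq_last b with ⟨b₀, rfl⟩ | rfl
      · rw [Fin.snoc_castSucc, Fin.snoc_castSucc] at hab
        exact congrArg Fin.castSucc (htinj hab)
      · rw [Fin.snoc_castSucc, Fin.snoc_last] at hab
        exfalso
        apply hv
        rw [hBad, ← hab]
        exact Finset.mem_union_left _ (Finset.mem_union_left _
          (Finset.mem_image_of_mem t (Finset.mem_univ a₀)))
      · rw [Fin.snoc_last, Fin.snoc_castSucc] at hab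
        exfalso
        apply hv
        rw [hBad, hab]
        exact Finset.mem_union_left _ (Finset.mem_union_left _
          (Finset.mem_image_of_mem t (Finset.mem_univ b₀)))
      · rfl
    · -- TProp
      intro a b c hab hbc hac α γ hα hγ hs hα1 hγ1 hs1 heq
      obtain ⟨ha1, ha2⟩ := abs_lt.mp hα1
      obtain ⟨hg1, hg2⟩ := abs_lt.mp hγ1
      obtain ⟨hss1, hss2⟩ := abs_lt.mp hs1
      rcases Fin.eq_castSucc_or_eq_last a with ⟨a₀, rfl⟩ | rfl <;>
        rcases Fin.eq_castSucc_or_eq_last b with ⟨b₀, rfl⟩ | rfl <;>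
        rcases Fin.eq_castSucc_or_eq_last c with ⟨c₀, rfl⟩ | rfl
      · -- all old
        rw [Fin.snoc_castSucc, Fin.snoc_castSucc, Fin.snoc_castSucc] at heq
        exact htT a₀ b₀ c₀ (fun h => hab (by rw [h])) (fun h => hbc (by rw [h]))
          (fun h => hac (by rw [h])) α γ hα hγ hs hα1 hγ1 hs1 heq
      · -- c = last : role C, convert to role A with swapped coefficients
        rw [Fin.snoc_castSucc, Fin.snoc_castSucc, Fin.snoc_last] at heq
        apply hv
        rw [hBad]
        apply Finset.mem_union_left
        apply Finset.mem_union_right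
        exact roleA_mem hr hrp hp2 γ.natAbs γ α le_rfl b₀ a₀ hγ hα (by omega)
          hg1 hg2 ha1 ha2 (by omega) (by omega)
          (by push_cast at heq ⊢; linear_combination heq)
      · -- b = last : role B
        rw [Fin.snoc_castSucc, Fin.snoc_last, Fin.snoc_castSucc] at heq
        apply hv
        rw [hBad]
        apply Finset.mem_union_right
        exact roleB_mem hr hrp hp2 α.natAbs α γ le_rfl a₀ c₀
          (fun h => hac (by rw [h])) hα hγ hs ha1 ha2 hg1 hg2 hss1 hss2 heq
      · -- b = last, c = last : impossible
        exact absurd rfl hbc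
      · -- a = last : role A
        rw [Fin.snoc_last, Fin.snoc_castSucc, Fin.snoc_castSucc] at heq
        apply hv
        rw [hBad]
        apply Finset.mem_union_left
        apply Finset.mem_union_right
        exact roleA_mem hr hrp hp2 α.natAbs α γ le_rfl b₀ c₀ hα hγ hs
          ha1 ha2 hg1 hg2 hss1 hss2 heq
      · exact absurd rfl hac
      · exact absurd rfl hab
      · exact absurd rfl hab

/-! ### The code construction -/

namespace BatchCode

section Constr

variable (r k p : ℕ) [NeZero p] (t : Fin k → ZMod p)

/-- the info coordinate of cell (row  i, column c) -/
def cellIdx (i : Fin r) (c : ZMod p) : Fin (r * p) :=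
  ⟨p * i.1 + c.val, by
    have h1 := ZMod.val_lt c
    have h2 : i.1 + 1 ≤ r := i.isLt
    calc p * i.1 + c.val < p * i.1 + p := by omega
      _ = p * (i.1 + 1) := by ring
      _ ≤ p * r := Nat.mul_le_mul_left p h2
      _ = r * p := Nat.mul_comm p r⟩

/-- the parity coordinate of class j, block c -/
def parIdx (j : Fin k) (c : ZMod p) : Fin (r * p + k * p) :=
  ⟨r * p + (p * j.1 + c.val), by
    have h1 := ZMod.val_lt c
    have h2 : j.1 + 1 ≤ k := j.isLt
    have h3 : p * (j.1 + 1) ≤ p * k := Nat.mul_le_mul_left p h2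
    have h4 : p * (j.1 + 1) = p * j.1 + p := by ring
    have h5 : p * k = k * p := Nat.mul_comm p k
    omega⟩

/-- embedding of info coordinates into the codeword index -/
def emb : Fin (r * p) → Fin (r * p + k * p) := Fin.castLE (Nat.le_add_right _ _)

def rowOf (u : Fin (r * p)) : Fin r :=
  ⟨u.1 / p, by
    rw [Nat.div_lt_iff_lt_mul (NeZero.pos p)]
    exact u.isLt⟩

def colOf (u : Fin (r * p)) : ZMod p := ((u.1 % p : ℕ) : ZMod p)

lemma val_natCast_mod (a : ℕ) : ((a : ZMod p)).val = a % p := ZMod.val_natCast p a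

lemma cell_rowcol (u : Fin (r * p)) : cellIdx r p (rowOf r p u) (colOf r p u) = u := by
  apply Fin.ext
  show p * (u.1 / p) + ((u.1 % p : ℕ) : ZMod p).val = u.1
  rw [val_natCast_mod]
  have h1 : u.1 % p % p = u.1 % p := Nat.mod_mod_of_dvd _ dvd_rfl
  have h2 := Nat.div_add_mod u.1 p
  omega

lemma cellIdx_inj {i i' : Fin r} {c c' : ZMod p} (h : cellIdx r p i c = cellIdx r p i' c') :
    i = i' ∧ c = c' := by
  have hv : p * i.1 + c.val = p * i'.1 + c'.val := congrArg Fin.val h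
  have h1 := ZMod.val_lt c
  have h2 := ZMod.val_lt c'
  have hi : i.1 = i'.1 := by
    rcases Nat.lt_trichotomy i.1 i'.1 with hl | he | hl
    · exfalso
      have h3 : p * (i.1 + 1) ≤ p * i'.1 := Nat.mul_le_mul_left p hl
      have h4 : p * (i.1 + 1) = p * i.1 + p := by ring
      omega
    · exact he
    · exfalso
      have h3 : p * (i'.1 + 1) ≤ p * i.1 := Nat.mul_le_mul_left p hl
      have h4 : p * (i'.1 + 1) = p * i'.1 + p := by ring
      omega
  constructor
  · exact Fin.ext hi
  · have hpe : p * i.1 = p * i'.1 := by rw [hi]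
    have : c.val = c'.val := by omega
    exact ZMod.val_injective p this

lemma parIdx_inj {j j' : Fin k} {c c' : ZMod p} (h : parIdx r k p j c = parIdx r k p j' c') :
    j = j' ∧ c = c' := by
  have hv0 : r * p + (p * j.1 + c.val) = r * p + (p * j'.1 + c'.val) := congrArg Fin.val h
  have hv : p * j.1 + c.val = p * j'.1 + c'.val := by omega
  have h1 := ZMod.val_lt c
  have h2 := ZMod.val_lt c'
  have hj : j.1 = j'.1 := by
    rcases Nat.lt_trichotomy j.1 j'.1 with hl | he | hl
    · exfalso
      have h3 : p * (j.1 + 1) ≤ p * j'.1 := Nat.mul_le_mul_left p hl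
      have h4 : p * (j.1 + 1) = p * j.1 + p := by ring
      omega
    · exact he
    · exfalso
      have h3 : p * (j'.1 + 1) ≤ p * j.1 := Nat.mul_le_mul_left p hl
      have h4 : p * (j'.1 + 1) = p * j'.1 + p := by ring
      omega
  constructor
  · exact Fin.ext hj
  · have hpe : p * j.1 = p * j'.1 := by rw [hj]
    have : c.val = c'.val := by omega
    exact ZMod.val_injective p this

lemma parIdx_ne_emb (j : Fin k) (c : ZMod p) (u : Fin (r * p)) :
    parIdx r k p j c ≠ emb r k p u := by
  intro h
  have := congrArg Fin.val h
  simp only [parIdx, emb, Fin.castLE] at this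
  have := u.isLt
  omega

lemma emb_inj : Function.Injective (emb r k p) := Fin.castLE_injective _

/-- the parity function: sum of a block of class `j` starting at column `c` -/
def parFun (x : Fin (r * p) → ZMod 2) (j : Fin k) (c : ZMod p) : ZMod 2 :=
  ∑ i : Fin r, x (cellIdx r p i (c + t j * ((i.1 : ℕ) : ZMod p)))

/-- the encoder -/
noncomputable def Emap : (Fin (r * p) → ZMod 2) →ₗ[ZMod 2] (Fin (r * p + k * p) → ZMod 2) where
  toFun x w :=
    if h : w.1 < r * p then x ⟨w.1, h⟩
    else parFun r k p t x ⟨(w.1 - r * p) / p, by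
        have hw := w.isLt
        rw [Nat.div_lt_iff_lt_mul (NeZero.pos p)]
        omega⟩
      (((w.1 - r * p) % p : ℕ) : ZMod p)
  map_add' x y := by
    funext w
    by_cases h : w.1 < r * p
    · simp [h]
    · simp only [h, dif_neg, not_false_iff, Pi.add_apply, parFun]
      rw [← Finset.sum_add_distrib]
  map_smul' a x := by
    funext w
    by_cases h : w.1 < r * p
    · simp [h]
    · simp only [h, dif_neg, not_false_iff, Pi.smul_apply, parFun, RingHom.id_apply,
        smul_eq_mul]
      rw [Finset.mul_sum]

lemma Emap_emb (x : Fin (r * p) → ZMod 2) (u : Fin (r * p)) :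
    Emap r k p t x (emb r k p u) = x u := by
  simp only [Emap, LinearMap.coe_mk, AddHom.coe_mk]
  have hc : ((emb r k p u).1) < r * p := u.isLt
  rw [dif_pos hc]
  exact congrArg x (Fin.ext rfl)

lemma Emap_par (x : Fin (r * p) → ZMod 2) (j : Fin k) (c : ZMod p) :
    Emap r k p t x (parIdx r k p j c) = parFun r k p t x j c := by
  simp only [Emap, LinearMap.coe_mk, AddHom.coe_mk]
  rw [dif_neg (by simp only [parIdx]; omega)]
  have hval : ((parIdx r k p j c).1 - r * p) = p * j.1 + c.val := by
    simp only [parIdx]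
    omega
  congr 1
  · apply Fin.ext
    show ((parIdx r k p j c).1 - r * p) / p = j.1
    rw [hval, Nat.mul_add_div (NeZero.pos p), Nat.div_eq_of_lt (ZMod.val_lt c)]
    omega
  · show ((((parIdx r k p j c).1 - r * p) % p : ℕ) : ZMod p) = c
    rw [hval, Nat.mul_add_mod, Nat.mod_eq_of_lt (ZMod.val_lt c), ZMod.natCast_val,
      ZMod.cast_id]

end Constr

end BatchCode

namespace BatchCode

section RecSets

variable (r k p : ℕ) [NeZero p] (t : Fin k → ZMod p)

/-- intercept (block identifier) of the class-`j` block through cell `u` -/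
def icpt (u : Fin (r * p)) (j : Fin k) : ZMod p :=
  colOf r p u - t j * (((rowOf r p u).1 : ℕ) : ZMod p)

/-- the info cell of the class-`j` block with intercept `c0` at row `i` -/
def lineCell (j : Fin k) (c0 : ZMod p) (i : Fin r) : Fin (r * p) :=
  cellIdx r p i (c0 + t j * ((i.1 : ℕ) : ZMod p))

/-- recovery set for info coordinate `u` using parity class `j` -/
noncomputable def RecSet (u : Fin (r * p)) (j : Fin k) : Finset (Fin (r * p + k * p)) :=
  insert (parIdx r k p j (icpt r k p t u j))
    ((Finset.univ.filter (fun i : Fin r => i ≠ rowOf r p u)).image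
      (fun i => emb r k p (lineCell r k p t j (icpt r k p t u j) i)))

lemma RecSet_card (hr : 0 < r) (u : Fin (r * p)) (j : Fin k) :
    (RecSet r k p t u j).card ≤ r := by
  classical
  refine (Finset.card_insert_le _ _).trans ?_
  have h1 : ((Finset.univ.filter (fun i : Fin r => i ≠ rowOf r p u)).image
      (fun i => emb r k p (lineCell r k p t j (icpt r k p t u j) i))).card
      ≤ (Finset.univ.filter (fun i : Fin r => i ≠ rowOf r p u)).card :=
    Finset.card_image_le
  have h2 : (Finset.univ.filter (fun i : Fin r => i ≠ rowOf r p u)) =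
      Finset.univ.erase (rowOf r p u) := by
    ext i
    simp [Finset.mem_erase]
  rw [h2] at h1 ⊢
  rw [Finset.card_erase_of_mem (Finset.mem_univ _)] at h1
  have h3 : (Finset.univ : Finset (Fin r)).card = r := by simp
  omega

lemma icpt_line (u : Fin (r * p)) (j : Fin k) :
    lineCell r k p t j (icpt r k p t u j) (rowOf r p u) = u := by
  rw [lineCell, icpt, sub_add_cancel, cell_rowcol]

/-- the recovery property -/
lemma RecSet_recovers (u : Fin (r * p)) (j : Fin k) (x x' : Fin (r * p) → ZMod 2)
    (hag : ∀ w ∈ RecSet r k p t u j, Emap r k p t x w = Emap r k p t x' w) :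
    x u = x' u := by
  classical
  set c0 := icpt r k p t u j with hc0
  have hpar : parFun r k p t x j c0 = parFun r k p t x' j c0 := by
    have := hag (parIdx r k p j c0) (Finset.mem_insert_self _ _)
    rwa [Emap_par, Emap_par] at this
  have hinfo : ∀ i : Fin r, i ≠ rowOf r p u →
      x (lineCell r k p t j c0 i) = x' (lineCell r k p t j c0 i) := by
    intro i hi
    have hmem : emb r k p (lineCell r k p t j c0 i) ∈ RecSet r k p t u j := by
      rw [RecSet]
      apply Finset.mem_insert_of_mem
      exact Finset.mem_image_of_mem _ (by simp [hi])
    have := hag _ hmem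
    rwa [Emap_emb, Emap_emb] at this
  rw [parFun, parFun] at hpar
  rw [← Finset.add_sum_erase _ _ (Finset.mem_univ (rowOf r p u)),
    ← Finset.add_sum_erase _ _ (Finset.mem_univ (rowOf r p u))] at hpar
  have hsame : ∑ i ∈ Finset.univ.erase (rowOf r p u),
      x (cellIdx r p i (c0 + t j * ((i.1 : ℕ) : ZMod p)))
      = ∑ i ∈ Finset.univ.erase (rowOf r p u),
        x' (cellIdx r p i (c0 + t j * ((i.1 : ℕ) : ZMod p))) := by
    apply Finset.sum_congr rfl
    intro i hi
    exact hinfo i (Finset.ne_of_mem_erase hi)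
  rw [hsame] at hpar
  have hkey : x (cellIdx r p (rowOf r p u) (c0 + t j * (((rowOf r p u).1 : ℕ) : ZMod p)))
      = x' (cellIdx r p (rowOf r p u) (c0 + t j * (((rowOf r p u).1 : ℕ) : ZMod p))) := by
    exact add_right_cancel hpar
  have : cellIdx r p (rowOf r p u) (c0 + t j * (((rowOf r p u).1 : ℕ) : ZMod p)) = u := by
    rw [hc0]
    exact icpt_line r k p t u j
  rwa [this] at hkey

end RecSets

end BatchCode

namespace BatchCode

section Conflict

variable (r k p : ℕ) [NeZero p] [Fact p.Prime] (t : Fin k → ZMod p)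

lemma rowcast_inj (hrp : r ≤ p) {a b : Fin r}
    (h : ((a.1 : ℕ) : ZMod p) = ((b.1 : ℕ) : ZMod p)) : a = b := by
  apply Fin.ext
  have hv := congrArg ZMod.val h
  rw [ZMod.val_natCast, ZMod.val_natCast, Nat.mod_eq_of_lt (a.isLt.trans_le hrp),
    Nat.mod_eq_of_lt (b.isLt.trans_le hrp)] at hv
  exact hv

lemma conflict_cases (u w : Fin (r * p)) (j e : Fin k)
    (h : ¬ Disjoint (RecSet r k p t u j) (RecSet r k p t w e)) :
    (j = e ∧ icpt r k p t u j = icpt r k p t w e) ∨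
    (∃ i : Fin r, i ≠ rowOf r p u ∧ i ≠ rowOf r p w ∧
      icpt r k p t u j + t j * ((i.1 : ℕ) : ZMod p)
        = icpt r k p t w e + t e * ((i.1 : ℕ) : ZMod p)) := by
  classical
  rw [Finset.not_disjoint_iff] at h
  obtain ⟨z, hz1, hz2⟩ := h
  rw [RecSet, Finset.mem_insert] at hz1 hz2
  rcases hz1 with hz1 | hz1 <;> rcases hz2 with hz2 | hz2
  · -- par = par
    left
    exact parIdx_inj r k p (hz1.symm.trans hz2)
  · -- z = par of u-set, z ∈ info of w-set
    exfalso
    rw [Finset.mem_image] at hz2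
    obtain ⟨i, _, hi2⟩ := hz2
    exact parIdx_ne_emb r k p j _ _ (hz1 ▸ hi2.symm)
  · exfalso
    rw [Finset.mem_image] at hz1
    obtain ⟨i, _, hi2⟩ := hz1
    exact parIdx_ne_emb r k p e _ _ (hz2 ▸ hi2.symm)
  · -- info/info
    right
    rw [Finset.mem_image] at hz1 hz2
    obtain ⟨i, hi1, hi2⟩ := hz1
    obtain ⟨i', hi'1, hi'2⟩ := hz2
    rw [Finset.mem_filter] at hi1 hi'1
    have hemb : lineCell r k p t j (icpt r k p t u j) i
        = lineCell r k p t e (icpt r k p t w e) i' :=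
      emb_inj r k p (hi2.trans hi'2.symm)
    rw [lineCell, lineCell] at hemb
    obtain ⟨hii, hcc⟩ := cellIdx_inj r p hemb
    subst hii
    exact ⟨i, hi1.2, hi'1.2, hcc⟩

lemma conflict_subsingleton (hr : 0 < r) (hrp : r ≤ p)
    (ht : Function.Injective t) (hT : TProp r p t)
    (u w : Fin (r * p)) (e : Fin k) (j1 j2 : Fin k)
    (h1 : ¬ Disjoint (RecSet r k p t u j1) (RecSet r k p t w e))
    (h2 : ¬ Disjoint (RecSet r k p t u j2) (RecSet r k p t w e)) :
    j1 = j2 := by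
  by_contra hne
  -- helper: info-conflict with equal intercepts gives contradiction
  have key : ∀ (j : Fin k), j ≠ e → icpt r k p t u e = icpt r k p t w e →
      ∀ i : Fin r, i ≠ rowOf r p u →
      icpt r k p t u j + t j * ((i.1 : ℕ) : ZMod p)
        = icpt r k p t w e + t e * ((i.1 : ℕ) : ZMod p) → False := by
    intro j hj hic i hi heq
    rw [← hic] at heq
    simp only [icpt] at heq
    have hfac : (t j - t e) * (((i.1 : ℕ) : ZMod p) - (((rowOf r p u).1 : ℕ) : ZMod p)) = 0 := by
      linear_combination heq
    rcases mul_eq_zero.mp hfac with hf | hf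
    · exact ht.ne hj (by linear_combination hf)
    · exact hi (rowcast_inj r p hrp (by linear_combination hf))
  rcases conflict_cases r k p t u w j1 e h1 with ⟨hj1e, hic1⟩ | ⟨i1, hi1u, hi1w, hE1⟩
  · rcases conflict_cases r k p t u w j2 e h2 with ⟨hj2e, hic2⟩ | ⟨i2, hi2u, hi2w, hE2⟩
    · exact hne (hj1e.trans hj2e.symm)
    · have hj2e : j2 ≠ e := fun h => hne (hj1e.trans h.symm)
      rw [hj1e] at hic1
      exact key j2 hj2e hic1 i2 hi2u hE2
  · rcases conflict_cases r k p t u w j2 e h2 with ⟨hj2e, hic2⟩ | ⟨i2, hi2u, hi2w, hE2⟩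
    · have hj1e : j1 ≠ e := fun h => hne (h.trans hj2e.symm)
      rw [hj2e] at hic2
      exact key j1 hj1e hic2 i1 hi1u hE1
    · by_cases hj1e : j1 = e
      · have hic : icpt r k p t u e = icpt r k p t w e := by
          rw [hj1e] at hE1
          linear_combination hE1
        exact key j2 (fun h => hne (hj1e.trans h.symm)) hic i2 hi2u hE2
      · by_cases hj2e : j2 = e
        · have hic : icpt r k p t u e = icpt r k p t w e := by
            rw [hj2e] at hE2
            linear_combination hE2
          exact key j1 hj1e hic i1 hi1u hE1
        · by_cases hii : i1 = i2
          · subst hii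
            simp only [icpt] at hE1 hE2
            have hfac : (t j1 - t j2) *
                (((i1.1 : ℕ) : ZMod p) - (((rowOf r p u).1 : ℕ) : ZMod p)) = 0 := by
              linear_combination hE1 - hE2
            rcases mul_eq_zero.mp hfac with hf | hf
            · exact hne (ht (by linear_combination hf))
            · exact hi1u (rowcast_inj r p hrp (by linear_combination hf))
          · have hi1' : i1.1 ≠ (rowOf r p u).1 := fun h => hi1u (Fin.ext h)
            have hi2' : i2.1 ≠ (rowOf r p u).1 := fun h => hi2u (Fin.ext h)
            have hi12 : i1.1 ≠ i2.1 := fun h => hii (Fin.ext h)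
            have hlt1 := i1.isLt
            have hlt2 := i2.isLt
            have hltu := (rowOf r p u).isLt
            apply hT j1 e j2 hj1e (fun h => hj2e h.symm) hne
              ((i1.1 : ℤ) - ((rowOf r p u).1 : ℤ)) (((rowOf r p u).1 : ℤ) - (i2.1 : ℤ))
              (by omega) (by omega) (by omega)
              (by rw [abs_lt]; omega) (by rw [abs_lt]; omega) (by rw [abs_lt]; omega)
            simp only [icpt] at hE1 hE2
            push_cast
            linear_combination hE1 - hE2

end Conflict

end BatchCode

namespace BatchCode

section Greedy

variable (r k p : ℕ) [NeZero p] [Fact p.Prime] (t : Fin k → ZMod p)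

lemma exists_assignment (hr : 0 < r) (hrp : r ≤ p)
    (ht : Function.Injective t) (hT : TProp r p t) :
    ∀ (m : ℕ), m ≤ k → ∀ (g : Fin m → Fin (r * p)),
    ∃ σ : Fin m → Fin k, ∀ a b : Fin m, a ≠ b →
      Disjoint (RecSet r k p t (g a) (σ a)) (RecSet r k p t (g b) (σ b)) := by
  intro m
  induction m with
  | zero =>
    intro _ g
    exact ⟨Fin.elim0, fun a => a.elim0⟩
  | succ m ih =>
    intro hm g
    obtain ⟨σ₀, hσ₀⟩ := ih (by omega) (fun a => g a.castSucc)
    classical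
    set u := g (Fin.last m) with hu
    set bad : Finset (Fin k) := Finset.univ.biUnion (fun b : Fin m =>
      Finset.univ.filter (fun j =>
        ¬ Disjoint (RecSet r k p t u j) (RecSet r k p t (g b.castSucc) (σ₀ b)))) with hbad
    have hbadcard : bad.card ≤ m := by
      refine (Finset.card_biUnion_le).trans ?_
      have hone : ∀ b : Fin m, (Finset.univ.filter (fun j =>
          ¬ Disjoint (RecSet r k p t u j)
            (RecSet r k p t (g b.castSucc) (σ₀ b)))).card ≤ 1 := by
        intro b
        apply Finset.card_le_one.mpr
        intro j1 hj1 j2 hj2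
        rw [Finset.mem_filter] at hj1 hj2
        exact conflict_subsingleton r k p t hr hrp ht hT u (g b.castSucc) (σ₀ b) j1 j2
          hj1.2 hj2.2
      calc ∑ b : Fin m, (Finset.univ.filter (fun j =>
            ¬ Disjoint (RecSet r k p t u j)
              (RecSet r k p t (g b.castSucc) (σ₀ b)))).card
          ≤ ∑ _b : Fin m, 1 := Finset.sum_le_sum (fun b _ => hone b)
        _ = m := by simp
    have hex : ∃ j0 : Fin k, j0 ∉ bad := by
      by_contra hc
      push_neg at hc
      have hsub : (Finset.univ : Finset (Fin k)) ⊆ bad := fun j _ => hc j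
      have := Finset.card_le_card hsub
      rw [Finset.card_univ, Fintype.card_fin] at this
      omega
    obtain ⟨j0, hj0⟩ := hex
    have hj0' : ∀ b : Fin m, Disjoint (RecSet r k p t u j0)
        (RecSet r k p t (g b.castSucc) (σ₀ b)) := by
      intro b
      by_contra hc
      apply hj0
      rw [hbad, Finset.mem_biUnion]
      exact ⟨b, Finset.mem_univ _, Finset.mem_filter.mpr ⟨Finset.mem_univ _, hc⟩⟩
    refine ⟨Fin.snoc σ₀ j0, ?_⟩
    intro a b hab
    rcases Fin.eq_castSucc_or_eq_last a with ⟨a₀, rfl⟩ | rfl <;>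
      rcases Fin.eq_castSucc_or_eq_last b with ⟨b₀, rfl⟩ | rfl
    · rw [Fin.snoc_castSucc, Fin.snoc_castSucc]
      exact hσ₀ a₀ b₀ (fun h => hab (by rw [h]))
    · rw [Fin.snoc_castSucc, Fin.snoc_last]
      exact (hj0' a₀).symm
    · rw [Fin.snoc_castSucc, Fin.snoc_last]
      exact hj0' b₀
    · exact absurd rfl hab

end Greedy

end BatchCode

/-- There is a binary `(r,k)`-batch code of length `N` and dimension `n`: a systematic
injective linear encoder such that every multiset request of `k` information coordinates can
be answered by `k` pairwise disjoint recovering sets, each of size at most `r`. -/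
def ExistsRBatchCode (N n r k : ℕ) : Prop :=
  ∃ (h : n ≤ N) (E : (Fin n → ZMod 2) →ₗ[ZMod 2] (Fin N → ZMod 2)),
    Function.Injective E ∧
    (∀ (x : Fin n → ZMod 2) (i : Fin n), E x (Fin.castLE h i) = x i) ∧
    ∀ req : Fin k → Fin n, ∃ R : Fin k → Finset (Fin N),
      (∀ a b, a ≠ b → Disjoint (R a) (R b)) ∧
      ∀ a, (R a).card ≤ r ∧
        ∀ x x' : Fin n → ZMod 2, (∀ c ∈ R a, E x c = E x' c) → x (req a) = x' (req a)

/-- For all positive integers `r, k`, if `p` is the smallest prime with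
`p > 2k²r²`, then there is a binary `(r,k)`-batch code of dimension `n = rp`, length
`rp + kp`, and redundancy `kp` (hence of rate `r/(r+k)`). -/
theorem stmt17 (r k p : ℕ) (hr : 0 < r) (hk : 0 < k) (hp : p.Prime)
    (hbig : 2 * k ^ 2 * r ^ 2 < p)
    (hmin : ∀ q : ℕ, q.Prime → 2 * k ^ 2 * r ^ 2 < q → p ≤ q) :
    ExistsRBatchCode (r * p + k * p) (r * p) r k := by
  haveI : Fact p.Prime := ⟨hp⟩
  haveI : NeZero p := ⟨hp.pos.ne'⟩
  obtain ⟨t, htinj, htT⟩ := exists_slopes r k p hr hk hp hbig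
  have hrp : r ≤ p := by
    have h1 : 1 ≤ k^2 := Nat.one_le_pow 2 k hk
    have h2 : r ≤ r^2 := by nlinarith
    have : r ≤ 2 * k^2 * r^2 := by nlinarith
    omega
  refine ⟨Nat.le_add_right _ _, BatchCode.Emap r k p t, ?_, ?_, ?_⟩
  · -- injectivity
    intro x y hxy
    funext u
    have := congrFun hxy (BatchCode.emb r k p u)
    rwa [BatchCode.Emap_emb, BatchCode.Emap_emb] at this
  · -- systematic
    intro x i
    have he : Fin.castLE (Nat.le_add_right (r*p) (k*p)) i = BatchCode.emb r k p i :=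
      Fin.ext rfl
    rw [he, BatchCode.Emap_emb]
  · -- requests
    intro req
    obtain ⟨σ, hσ⟩ := BatchCode.exists_assignment r k p t hr hrp htinj htT k le_rfl req
    refine ⟨fun a => BatchCode.RecSet r k p t (req a) (σ a), hσ, ?_⟩
    intro a
    constructor
    · exact BatchCode.RecSet_card r k p t hr (req a) (σ a)
    · intro x x' hag
      exact BatchCode.RecSet_recovers r k p t (req a) (σ a) x x' hag
end

section
/- Let p ≥ 5 be a prime and n = p². The binary code obtained from the array code C(r = p, p, S = {0,1,2,3,4}) by appending one additional global parity bit equal to the sum of all p² information bits is a 5-batch code of dimension p² and length p² + 5p + 1. In particular, r_B(p², 5) ≤ 5p + 1 = Θ(√n). -/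
/-- The diagonal `D_{s,t} = { (i, (t + i·s) mod p) : i ∈ [r] } ⊆ [r] × [p]`. -/
def diag (r p s t : ℕ) : Finset (ℕ × ℕ) :=
  (Finset.range r).image fun i => (i, (t + i * s) % p)

/-- The encoder of the code extending the array code `C(r = p, p, S = {0,1,2,3,4})` by one
additional global parity bit: the `p × p` information array `x` is kept systematically, for
each slope `ℓ ∈ {0,…,4}` and each `t ∈ [p]` the parity bit
`ρ_{ℓ,t} = ∑_{(i,j) ∈ D_{ℓ,t}} x_{i,j}` is appended, and finally one global parity bit
`∑_{(i,j)} x_{i,j}` is appended. -/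
def ext5Encode (p : ℕ) (x : Fin p × Fin p → ZMod 2) :
    (Fin p × Fin p) ⊕ (Fin 5 × Fin p) ⊕ Unit → ZMod 2 :=
  fun c =>
    match c with
    | Sum.inl ij => x ij
    | Sum.inr (Sum.inl (l, t)) =>
        ∑ ij ∈ Finset.univ.filter
            (fun ij : Fin p × Fin p => ((ij.1 : ℕ), (ij.2 : ℕ)) ∈ diag p p (l : ℕ) (t : ℕ)),
          x ij
    | Sum.inr (Sum.inr _) => ∑ ij : Fin p × Fin p, x ij

namespace Stmt19

variable (p : ℕ)

abbrev Cell (p : ℕ) := Fin p × Fin p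
abbrev Coords (p : ℕ) := (Fin p × Fin p) ⊕ (Fin 5 × Fin p) ⊕ Unit

def lineCells (L : Fin 5 × Fin p) : Finset (Cell p) :=
  Finset.univ.filter
    (fun ij : Fin p × Fin p => ((ij.1 : ℕ), (ij.2 : ℕ)) ∈ diag p p ((L.1 : Fin 5) : ℕ) ((L.2 : Fin p) : ℕ))

lemma encode_line (x : Cell p → ZMod 2) (L : Fin 5 × Fin p) :
    ext5Encode p x (Sum.inr (Sum.inl L)) = ∑ c ∈ lineCells p L, x c := by
  obtain ⟨l, t⟩ := L; rfl

def covOdd (𝓛 : Finset (Fin 5 × Fin p)) (u : Cell p) : Finset (Cell p) :=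
  Finset.univ.filter
    (fun c => (∑ L ∈ 𝓛, if c ∈ lineCells p L then (1 : ZMod 2) else 0) +
      (if c = u then 1 else 0) = 1)

def Rset (𝓛 : Finset (Fin 5 × Fin p)) (u : Cell p) : Finset (Coords p) :=
  𝓛.image (fun L => Sum.inr (Sum.inl L)) ∪ (covOdd p 𝓛 u).image Sum.inl

lemma sum_eq_ite (S : Finset (Cell p)) (x : Cell p → ZMod 2) :
    ∑ c ∈ S, x c = ∑ c : Cell p, if c ∈ S then x c else 0 := by
  rw [← Finset.sum_filter, Finset.filter_mem_eq_inter, Finset.univ_inter]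

lemma key_identity (𝓛 : Finset (Fin 5 × Fin p)) (u : Cell p) (x : Cell p → ZMod 2) :
    x u = (∑ L ∈ 𝓛, ∑ c ∈ lineCells p L, x c) + ∑ c ∈ covOdd p 𝓛 u, x c := by
  have hz : ∀ v a : ZMod 2, (if v = 1 then a else 0) = v * a := by decide
  have hz2 : ∀ g e a : ZMod 2, g * a + (g + e) * a = e * a := by decide
  have h1 : (∑ L ∈ 𝓛, ∑ c ∈ lineCells p L, x c)
      = ∑ c : Cell p, (∑ L ∈ 𝓛, if c ∈ lineCells p L then (1 : ZMod 2) else 0) * x c := by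
    rw [Finset.sum_congr rfl fun L _ => sum_eq_ite p (lineCells p L) x]
    rw [Finset.sum_comm]
    refine Finset.sum_congr rfl fun c _ => ?_
    rw [Finset.sum_mul]
    refine Finset.sum_congr rfl fun L _ => ?_
    rw [boole_mul]
  have h2 : (∑ c ∈ covOdd p 𝓛 u, x c)
      = ∑ c : Cell p, ((∑ L ∈ 𝓛, if c ∈ lineCells p L then (1 : ZMod 2) else 0) +
          (if c = u then 1 else 0)) * x c := by
    rw [covOdd, Finset.sum_filter]
    refine Finset.sum_congr rfl fun c _ => ?_
    rw [hz]
  rw [h1, h2, ← Finset.sum_add_distrib]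
  have h3 : ∀ c : Cell p,
      (∑ L ∈ 𝓛, if c ∈ lineCells p L then (1 : ZMod 2) else 0) * x c +
      ((∑ L ∈ 𝓛, if c ∈ lineCells p L then (1 : ZMod 2) else 0) +
          (if c = u then 1 else 0)) * x c = (if c = u then 1 else 0) * x c :=
    fun c => hz2 _ _ _
  calc x u = ∑ c : Cell p, (if c = u then 1 else 0) * x c := by
        simp only [boole_mul]
        rw [Finset.sum_ite_eq' Finset.univ u x]
        simp
    _ = _ := by exact (Finset.sum_congr rfl fun c _ => (h3 c)).symm

lemma Rset_recovers (𝓛 : Finset (Fin 5 × Fin p)) (u : Cell p)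
    (x x' : Cell p → ZMod 2)
    (h : ∀ c ∈ Rset p 𝓛 u, ext5Encode p x c = ext5Encode p x' c) : x u = x' u := by
  rw [key_identity p 𝓛 u x, key_identity p 𝓛 u x']
  congr 1
  · refine Finset.sum_congr rfl fun L hL => ?_
    rw [← encode_line, ← encode_line]
    exact h _ (Finset.mem_union_left _ (Finset.mem_image_of_mem _ hL))
  · refine Finset.sum_congr rfl fun c hc => ?_
    exact h _ (Finset.mem_union_right _ (Finset.mem_image_of_mem _ hc))


def toZ (c : Cell p) : ZMod p × ZMod p := (((c.1 : ℕ) : ZMod p), ((c.2 : ℕ) : ZMod p))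

def slopeZ (ℓ : Fin 5) : ZMod p := ((ℓ : ℕ) : ZMod p)

def key (ℓ : Fin 5) (z : ZMod p × ZMod p) : ZMod p := z.2 - slopeZ p ℓ * z.1

def ψ (hp0 : p ≠ 0) (z : ZMod p) : Fin p :=
  ⟨z.val, by haveI : NeZero p := ⟨hp0⟩; exact ZMod.val_lt z⟩

lemma ψ_cast (hp0 : p ≠ 0) (z : ZMod p) : (((ψ p hp0 z : Fin p) : ℕ) : ZMod p) = z := by
  haveI : NeZero p := ⟨hp0⟩
  exact ZMod.natCast_rightInverse z

def mkLine (hp0 : p ≠ 0) (ℓ : Fin 5) (t : ZMod p) : Fin 5 × Fin p := (ℓ, ψ p hp0 t)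

def cellOf (hp0 : p ≠ 0) (z : ZMod p × ZMod p) : Cell p := (ψ p hp0 z.1, ψ p hp0 z.2)

lemma toZ_cellOf (hp0 : p ≠ 0) (z : ZMod p × ZMod p) : toZ p (cellOf p hp0 z) = z := by
  unfold toZ cellOf
  ext <;> simp [ψ_cast]

lemma toZ_inj (c c' : Cell p) (h : toZ p c = toZ p c') : c = c' := by
  unfold toZ at h
  obtain ⟨h1, h2⟩ := Prod.mk.injEq .. ▸ h
  have e1 : ((c.1 : ℕ) : ZMod p).val = ((c'.1 : ℕ) : ZMod p).val := by rw [h1]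
  have e2 : ((c.2 : ℕ) : ZMod p).val = ((c'.2 : ℕ) : ZMod p).val := by rw [h2]
  rw [ZMod.val_cast_of_lt c.1.isLt, ZMod.val_cast_of_lt c'.1.isLt] at e1
  rw [ZMod.val_cast_of_lt c.2.isLt, ZMod.val_cast_of_lt c'.2.isLt] at e2
  ext
  · exact e1
  · exact e2

lemma slopeZ_inj (hp5 : 5 ≤ p) {ℓ ℓ' : Fin 5} (h : slopeZ p ℓ = slopeZ p ℓ') : ℓ = ℓ' := by
  unfold slopeZ at h
  have e : ((ℓ : ℕ) : ZMod p).val = ((ℓ' : ℕ) : ZMod p).val := by rw [h]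
  rw [ZMod.val_cast_of_lt (lt_of_lt_of_le ℓ.isLt hp5),
    ZMod.val_cast_of_lt (lt_of_lt_of_le ℓ'.isLt hp5)] at e
  exact Fin.ext e

lemma mem_lineCells (hp0 : p ≠ 0) (c : Cell p) (ℓ : Fin 5) (t : ZMod p) :
    c ∈ lineCells p (mkLine p hp0 ℓ t) ↔ key p ℓ (toZ p c) = t := by
  unfold lineCells mkLine diag
  rw [Finset.mem_filter]
  simp only [Finset.mem_univ, true_and, Finset.mem_image, Finset.mem_range, Prod.mk.injEq]
  constructor
  · rintro ⟨i, hi, hieq, hmod⟩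
    subst hieq
    have : ((((ψ p hp0 t : Fin p) : ℕ) + (c.1 : ℕ) * (ℓ : ℕ) : ℕ) : ZMod p)
        = ((c.2 : ℕ) : ZMod p) := by
      have h2 := congrArg (Nat.cast : ℕ → ZMod p) hmod
      rwa [ZMod.natCast_mod] at h2
    push_cast at this
    rw [ψ_cast] at this
    unfold key toZ slopeZ
    simp only
    rw [← this]; ring
  · intro hk
    refine ⟨c.1, c.1.isLt, rfl, ?_⟩
    have hlt : ((c.2 : Fin p) : ℕ) < p := c.2.isLt
    have : ((((ψ p hp0 t : Fin p) : ℕ) + (c.1 : ℕ) * (ℓ : ℕ) : ℕ) : ZMod p)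
        = ((c.2 : ℕ) : ZMod p) := by
      push_cast
      rw [ψ_cast]
      unfold key toZ slopeZ at hk
      simp only at hk
      rw [← hk]; ring
    have hmod := (ZMod.natCast_eq_natCast_iff _ _ _).mp this
    unfold Nat.ModEq at hmod
    rw [Nat.mod_eq_of_lt hlt] at hmod
    exact hmod

lemma two_point (hp : p.Prime) (hp5 : 5 ≤ p) {ℓ ℓ' : Fin 5} (h : ℓ ≠ ℓ')
    {z z' : ZMod p × ZMod p}
    (h1 : key p ℓ z = key p ℓ z') (h2 : key p ℓ' z = key p ℓ' z') : z = z' := by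
  haveI : Fact p.Prime := ⟨hp⟩
  unfold key at h1 h2
  have hs : slopeZ p ℓ - slopeZ p ℓ' ≠ 0 := by
    intro hc
    exact h (slopeZ_inj p hp5 (by linear_combination hc))
  have hx : z.1 = z'.1 := by
    have : (slopeZ p ℓ - slopeZ p ℓ') * z.1 = (slopeZ p ℓ - slopeZ p ℓ') * z'.1 := by
      linear_combination h2 - h1
    exact mul_left_cancel₀ hs this
  have hy : z.2 = z'.2 := by linear_combination h1 + (slopeZ p ℓ) * hx
  exact Prod.ext hx hy

def lineThru (hp0 : p ≠ 0) (ℓ : Fin 5) (c : Cell p) : Fin 5 × Fin p :=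
  mkLine p hp0 ℓ (key p ℓ (toZ p c))

lemma mem_lineThru (hp0 : p ≠ 0) (ℓ : Fin 5) (c c' : Cell p) :
    c' ∈ lineCells p (lineThru p hp0 ℓ c) ↔ key p ℓ (toZ p c') = key p ℓ (toZ p c) :=
  mem_lineCells p hp0 c' ℓ _

lemma self_mem_lineThru (hp0 : p ≠ 0) (ℓ : Fin 5) (c : Cell p) :
    c ∈ lineCells p (lineThru p hp0 ℓ c) := (mem_lineThru p hp0 ℓ c c).mpr rfl

lemma mkLine_inj (hp0 : p ≠ 0) {ℓ ℓ' : Fin 5} {t t' : ZMod p}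
    (h : mkLine p hp0 ℓ t = mkLine p hp0 ℓ' t') : ℓ = ℓ' ∧ t = t' := by
  unfold mkLine at h
  obtain ⟨h1, h2⟩ := Prod.mk.injEq .. ▸ h
  refine ⟨h1, ?_⟩
  rw [← ψ_cast p hp0 t, ← ψ_cast p hp0 t', h2]

lemma mem_covOdd_empty (u c : Cell p) : c ∈ covOdd p ∅ u ↔ c = u := by
  unfold covOdd
  rw [Finset.mem_filter]
  simp only [Finset.mem_univ, true_and, Finset.sum_empty, zero_add]
  by_cases h : c = u <;> simp [h]

lemma mem_covOdd_single (L : Fin 5 × Fin p) (u : Cell p) (hu : u ∈ lineCells p L)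
    (c : Cell p) : c ∈ covOdd p {L} u ↔ (c ∈ lineCells p L ∧ c ≠ u) := by
  unfold covOdd
  rw [Finset.mem_filter]
  simp only [Finset.mem_univ, true_and, Finset.sum_singleton]
  by_cases h1 : c = u
  · subst h1
    simp [hu]
  · by_cases h2 : c ∈ lineCells p L <;> simp [h1, h2]

lemma mem_covOdd_triple (A B C : Fin 5 × Fin p) (hAB : A ≠ B) (hAC : A ≠ C) (hBC : B ≠ C)
    (u c : Cell p) : c ∈ covOdd p {A, B, C} u ↔
      ((if c ∈ lineCells p A then (1 : ZMod 2) else 0) +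
       ((if c ∈ lineCells p B then (1 : ZMod 2) else 0) +
       ((if c ∈ lineCells p C then (1 : ZMod 2) else 0) +
       (if c = u then (1 : ZMod 2) else 0))) = 1) := by
  unfold covOdd
  rw [Finset.mem_filter]
  simp only [Finset.mem_univ, true_and]
  rw [show ({A, B, C} : Finset (Fin 5 × Fin p)) = insert A (insert B {C}) from rfl,
    Finset.sum_insert (by simp [hAB, hAC]), Finset.sum_insert (by simp [hBC]),
    Finset.sum_singleton, add_assoc, add_assoc]

lemma disjoint_Rset (𝓛1 𝓛2 : Finset (Fin 5 × Fin p)) (u1 u2 : Cell p)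
    (h1 : Disjoint 𝓛1 𝓛2) (h2 : Disjoint (covOdd p 𝓛1 u1) (covOdd p 𝓛2 u2)) :
    Disjoint (Rset p 𝓛1 u1) (Rset p 𝓛2 u2) := by
  rw [Finset.disjoint_left]
  intro c hc1 hc2
  rcases Finset.mem_union.mp hc1 with h | h <;> rcases Finset.mem_union.mp hc2 with h' | h'
  · obtain ⟨L, hL, rfl⟩ := Finset.mem_image.mp h
    obtain ⟨L', hL', hE⟩ := Finset.mem_image.mp h'
    cases hE
    exact (Finset.disjoint_left.mp h1) hL hL'
  · obtain ⟨L, hL, rfl⟩ := Finset.mem_image.mp h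
    obtain ⟨c', hc', hE⟩ := Finset.mem_image.mp h'
    cases hE
  · obtain ⟨c', hc', rfl⟩ := Finset.mem_image.mp h
    obtain ⟨L, hL, hE⟩ := Finset.mem_image.mp h'
    cases hE
  · obtain ⟨c', hc', rfl⟩ := Finset.mem_image.mp h
    obtain ⟨c'', hc'', hE⟩ := Finset.mem_image.mp h'
    cases hE
    exact (Finset.disjoint_left.mp h2) hc' hc''


section Req

variable (req : Fin 5 → Cell p)

def kIdx (a : Fin 5) : ℕ := (Finset.univ.filter (fun b => b < a ∧ req b = req a)).card

def fib (a : Fin 5) : Finset (Fin 5) := Finset.univ.filter (fun b => req b = req a)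

def Forb (a : Fin 5) : Finset (Fin 5) :=
  Finset.univ.filter (fun ℓ => ∃ b, req b ≠ req a ∧
    key p ℓ (toZ p (req b)) = key p ℓ (toZ p (req a)))

def Allowed (a : Fin 5) : Finset (Fin 5) := Finset.univ \ Forb p req a

lemma mem_fib {a b : Fin 5} : b ∈ fib p req a ↔ req b = req a := by
  unfold fib
  simp

lemma unique_slope (hp : p.Prime) (hp5 : 5 ≤ p) {c c' : Cell p} (hne : c ≠ c')
    {ℓ ℓ' : Fin 5} (h1 : key p ℓ (toZ p c) = key p ℓ (toZ p c'))
    (h2 : key p ℓ' (toZ p c) = key p ℓ' (toZ p c')) : ℓ = ℓ' := by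
  by_contra hll
  exact hne (toZ_inj p c c' (two_point p hp hp5 hll h1 h2))

lemma kIdx_lt (a b : Fin 5) (hab : a < b) (hcell : req a = req b) :
    kIdx p req a < kIdx p req b := by
  apply Finset.card_lt_card
  constructor
  · intro c hc
    rw [Finset.mem_filter] at hc ⊢
    exact ⟨hc.1, lt_trans hc.2.1 hab, hc.2.2.trans hcell⟩
  · intro hsub
    have ha : a ∈ Finset.univ.filter (fun c => c < b ∧ req c = req b) := by
      rw [Finset.mem_filter]; exact ⟨Finset.mem_univ _, hab, hcell⟩
    have := hsub ha
    rw [Finset.mem_filter] at this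
    exact absurd this.2.1 (lt_irrefl a)

lemma kIdx_ne (a b : Fin 5) (hab : a ≠ b) (hcell : req a = req b) :
    kIdx p req a ≠ kIdx p req b := by
  rcases lt_or_gt_of_ne hab with h | h
  · exact Nat.ne_of_lt (kIdx_lt p req a b h hcell)
  · exact (Nat.ne_of_lt (kIdx_lt p req b a h hcell.symm)).symm

lemma kIdx_lt_fib (a : Fin 5) : kIdx p req a < (fib p req a).card := by
  apply Finset.card_lt_card
  constructor
  · intro c hc
    rw [Finset.mem_filter] at hc
    exact (mem_fib p req).mpr hc.2.2
  · intro hsub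
    have ha : a ∈ fib p req a := (mem_fib p req).mpr rfl
    have := hsub ha
    rw [Finset.mem_filter] at this
    exact absurd this.2.1 (lt_irrefl a)

lemma exists_rep (a : Fin 5) : ∃ b, kIdx p req b = 0 ∧ req b = req a := by
  have hne : (fib p req a).Nonempty :=
    ⟨a, by rw [fib, Finset.mem_filter]; exact ⟨Finset.mem_univ _, rfl⟩⟩
  refine ⟨(fib p req a).min' hne, ?_, ?_⟩
  · rw [kIdx, Finset.card_eq_zero, Finset.filter_eq_empty_iff]
    intro c _
    rintro ⟨hlt, hcell⟩
    have hmem : (fib p req a).min' hne ∈ fib p req a := Finset.min'_mem _ _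
    rw [mem_fib] at hmem
    have : c ∈ fib p req a := (mem_fib p req).mpr (hcell.trans hmem)
    exact absurd hlt (not_lt.mpr (Finset.min'_le _ _ this))
  · have hmem := Finset.min'_mem (fib p req a) hne
    rw [mem_fib] at hmem
    exact hmem

lemma forb_card (hp : p.Prime) (hp5 : 5 ≤ p) (a : Fin 5) :
    (Forb p req a).card ≤ ((Finset.univ.image req).erase (req a)).card := by
  classical
  apply Finset.card_le_card_of_injOn
    (fun ℓ => if h : ∃ b, req b ≠ req a ∧
        key p ℓ (toZ p (req b)) = key p ℓ (toZ p (req a)) then req h.choose else req a)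
  · intro ℓ hℓ
    simp only [Finset.mem_coe, Forb, Finset.mem_filter] at hℓ
    simp only [Finset.mem_coe]
    rw [dif_pos hℓ.2]
    obtain ⟨hb1, _⟩ := hℓ.2.choose_spec
    exact Finset.mem_erase.mpr ⟨hb1, Finset.mem_image_of_mem _ (Finset.mem_univ _)⟩
  · intro ℓ1 h1 ℓ2 h2 heq
    simp only [Finset.mem_coe, Forb, Finset.mem_filter] at h1 h2
    simp only [dif_pos h1.2, dif_pos h2.2] at heq
    obtain ⟨hb1, hk1⟩ := h1.2.choose_spec
    obtain ⟨hb2, hk2⟩ := h2.2.choose_spec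
    rw [← heq] at hk2
    exact unique_slope p hp hp5 hb1 hk1 hk2

lemma forb_card_fib (hp : p.Prime) (hp5 : 5 ≤ p) (a : Fin 5) :
    (Forb p req a).card + (fib p req a).card ≤ 5 := by
  have h1 := forb_card p req hp hp5 a
  have h2 : ((Finset.univ.image req).erase (req a)) ⊆
      (Finset.univ.filter (fun b => ¬ req b = req a)).image req := by
    intro y hy
    rw [Finset.mem_erase] at hy
    obtain ⟨hy1, hy2⟩ := hy
    obtain ⟨b, _, rfl⟩ := Finset.mem_image.mp hy2
    exact Finset.mem_image_of_mem _ (Finset.mem_filter.mpr ⟨Finset.mem_univ _, hy1⟩)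
  have h3 := (Finset.card_le_card h2).trans (Finset.card_image_le)
  have h4 := Finset.card_filter_add_card_filter_not
    (s := (Finset.univ : Finset (Fin 5))) (p := fun b => req b = req a)
  unfold fib
  simp only [Finset.card_univ, Fintype.card_fin] at h4
  omega

lemma forb_card_r (hp : p.Prime) (hp5 : 5 ≤ p) (a : Fin 5) :
    (Forb p req a).card + 1 ≤ (Finset.univ.image req).card := by
  have h1 := forb_card p req hp hp5 a
  have hmem : req a ∈ Finset.univ.image req := Finset.mem_image_of_mem _ (Finset.mem_univ _)
  rw [Finset.card_erase_of_mem hmem] at h1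
  have : 1 ≤ (Finset.univ.image req).card := Finset.card_pos.mpr ⟨req a, hmem⟩
  omega

lemma image_eq_rep_image :
    Finset.univ.image req = (Finset.univ.filter (fun a => kIdx p req a = 0)).image req := by
  apply Finset.Subset.antisymm
  · intro y hy
    obtain ⟨a, _, rfl⟩ := Finset.mem_image.mp hy
    obtain ⟨b, hb1, hb2⟩ := exists_rep p req a
    exact Finset.mem_image.mpr ⟨b, Finset.mem_filter.mpr ⟨Finset.mem_univ _, hb1⟩, hb2⟩
  · exact Finset.image_subset_image (Finset.filter_subset _ _)

lemma r_le (hE : (Finset.univ.filter (fun a => 0 < kIdx p req a)).card = 2) :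
    (Finset.univ.image req).card ≤ 3 := by
  rw [image_eq_rep_image]
  have h4 := Finset.card_filter_add_card_filter_not
    (s := (Finset.univ : Finset (Fin 5))) (p := fun a => 0 < kIdx p req a)
  simp only [Finset.card_univ, Fintype.card_fin] at h4
  have : (Finset.univ.filter (fun a => ¬ 0 < kIdx p req a))
      = (Finset.univ.filter (fun a => kIdx p req a = 0)) := by
    apply Finset.filter_congr
    intro a _
    simp [Nat.pos_iff_ne_zero]
  rw [this] at h4
  have := Finset.card_image_le (s := Finset.univ.filter (fun a => kIdx p req a = 0)) (f := req)
  omega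

end Req

lemma meet_exists (hp : p.Prime) (hp5 : 5 ≤ p) {ℓ ℓ' : Fin 5} (h : ℓ ≠ ℓ')
    (t t' : ZMod p) : ∃ z : ZMod p × ZMod p, key p ℓ z = t ∧ key p ℓ' z = t' := by
  haveI : Fact p.Prime := ⟨hp⟩
  have hs : slopeZ p ℓ' - slopeZ p ℓ ≠ 0 :=
    sub_ne_zero.mpr (fun hc => h (slopeZ_inj p hp5 hc.symm))
  refine ⟨⟨(t - t') / (slopeZ p ℓ' - slopeZ p ℓ),
    t + slopeZ p ℓ * ((t - t') / (slopeZ p ℓ' - slopeZ p ℓ))⟩, ?_, ?_⟩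
  · simp only [key]
    ring
  · simp only [key]
    field_simp
    ring

lemma gadget (hp : p.Prime) (hp5 : 5 ≤ p) (hp0 : p ≠ 0) (c d : Cell p) (hcd : c ≠ d)
    (ℓ1 ℓ2 : Fin 5) (h12 : ℓ1 ≠ ℓ2)
    (hd1 : key p ℓ1 (toZ p d) ≠ key p ℓ1 (toZ p c))
    (hd2 : key p ℓ2 (toZ p d) ≠ key p ℓ2 (toZ p c)) :
    ∃ A B C : Fin 5 × Fin p,
      (A ≠ B ∧ A ≠ C ∧ B ≠ C) ∧
      (A ≠ lineThru p hp0 ℓ1 c ∧ A ≠ lineThru p hp0 ℓ2 c ∧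
       B ≠ lineThru p hp0 ℓ1 c ∧ B ≠ lineThru p hp0 ℓ2 c ∧
       C ≠ lineThru p hp0 ℓ1 c ∧ C ≠ lineThru p hp0 ℓ2 c) ∧
      (d ∈ lineCells p A ∧ d ∉ lineCells p B ∧ d ∉ lineCells p C) ∧
      (∀ z : Cell p, z ∈ lineCells p (lineThru p hp0 ℓ1 c) →
        (z ∉ lineCells p A ∧ (z ∈ lineCells p B ↔ z ∈ lineCells p C))) ∧
      (∀ z : Cell p, z ∈ lineCells p (lineThru p hp0 ℓ2 c) →
        (z ∉ lineCells p B ∧ (z ∈ lineCells p A ↔ z ∈ lineCells p C))) := by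
  haveI : Fact p.Prime := ⟨hp⟩
  set zc := toZ p c with hzc
  set zd := toZ p d with hzd
  set t1 := key p ℓ1 zc with ht1
  set t2 := key p ℓ2 zc with ht2
  set tA := key p ℓ1 zd with htA
  obtain ⟨z2, hz2A, hz2D2⟩ := meet_exists p hp hp5 h12 tA t2
  obtain ⟨w, hwD1, hwB'⟩ := meet_exists p hp hp5 h12 t1 (key p ℓ2 zd)
  have hz2c : z2 ≠ zc := by
    intro h
    exact hd1 (by rw [← hz2A, h, ← ht1])
  have hz2w : z2 ≠ w := by
    intro h
    exact hd1 (by rw [← hz2A, h, hwD1])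
  set B1 : Finset (Fin 5) := Finset.univ.filter (fun σ => key p σ z2 = key p σ zc) with hB1def
  set B2 : Finset (Fin 5) := Finset.univ.filter (fun σ => key p σ z2 = key p σ w) with hB2def
  have hB1card : B1.card ≤ 1 := by
    rw [Finset.card_le_one]
    intro x hx y hy
    rw [hB1def, Finset.mem_filter] at hx hy
    by_contra hxy
    exact hz2c (two_point p hp hp5 hxy hx.2 hy.2)
  have hB2card : B2.card ≤ 1 := by
    rw [Finset.card_le_one]
    intro x hx y hy
    rw [hB2def, Finset.mem_filter] at hx hy
    by_contra hxy
    exact hz2w (two_point p hp hp5 hxy hx.2 hy.2)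
  have hbad : (insert ℓ1 (insert ℓ2 (B1 ∪ B2))).card ≤ 4 := by
    have h1 := Finset.card_insert_le ℓ1 (insert ℓ2 (B1 ∪ B2))
    have h2 := Finset.card_insert_le ℓ2 (B1 ∪ B2)
    have h3 := Finset.card_union_le B1 B2
    omega
  have hgood : (Finset.univ \ insert ℓ1 (insert ℓ2 (B1 ∪ B2))).Nonempty := by
    rw [← Finset.card_pos, Finset.card_sdiff_of_subset (Finset.subset_univ _)]
    simp only [Finset.card_univ, Fintype.card_fin]
    omega
  obtain ⟨σ, hσ⟩ := hgood
  rw [Finset.mem_sdiff, Finset.mem_insert, Finset.mem_insert, Finset.mem_union] at hσ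
  push_neg at hσ
  obtain ⟨-, hσ1, hσ2, hσB1, hσB2⟩ := hσ
  have hσ3 : key p σ z2 ≠ key p σ zc := by
    intro h
    exact hσB1 (by rw [hB1def, Finset.mem_filter]; exact ⟨Finset.mem_univ _, h⟩)
  have hσ4 : key p σ z2 ≠ key p σ w := by
    intro h
    exact hσB2 (by rw [hB2def, Finset.mem_filter]; exact ⟨Finset.mem_univ _, h⟩)
  set tC := key p σ z2 with htC
  obtain ⟨z1, hz1C, hz1D1⟩ := meet_exists p hp hp5 hσ1 tC t1
  set tB := key p ℓ2 z1 with htB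
  have hz1c : z1 ≠ zc := by
    intro h
    apply hσ3
    rw [← hz1C, h]
  have hz1w : z1 ≠ w := by
    intro h
    apply hσ4
    rw [← hz1C, h]
  have htB2 : tB ≠ t2 := by
    intro h
    exact hz1c (two_point p hp hp5 h12 (hz1D1.trans ht1) ((htB.symm.trans h).trans ht2))
  have htBd : tB ≠ key p ℓ2 zd := by
    intro h
    exact hz1w (two_point p hp hp5 h12 (hz1D1.trans hwD1.symm) ((htB.symm.trans h).trans hwB'.symm))
  have htCd : key p σ zd ≠ tC := by
    intro h
    have hzd2 : zd = z2 :=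
      two_point p hp hp5 hσ1 (h.trans htC) (htA.symm.trans hz2A.symm)
    exact hd2 (by rw [hzd2]; exact hz2D2)
  have hD1 : lineThru p hp0 ℓ1 c = mkLine p hp0 ℓ1 t1 := by
    unfold lineThru
    rw [← hzc, ← ht1]
  have hD2 : lineThru p hp0 ℓ2 c = mkLine p hp0 ℓ2 t2 := by
    unfold lineThru
    rw [← hzc, ← ht2]
  rw [hD1, hD2]
  refine ⟨mkLine p hp0 ℓ1 tA, mkLine p hp0 ℓ2 tB, mkLine p hp0 σ tC, ?_, ?_, ?_, ?_, ?_⟩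
  · refine ⟨?_, ?_, ?_⟩ <;> intro h
    · exact h12 (mkLine_inj p hp0 h).1
    · exact hσ1 (mkLine_inj p hp0 h).1.symm
    · exact hσ2 (mkLine_inj p hp0 h).1.symm
  · refine ⟨?_, ?_, ?_, ?_, ?_, ?_⟩ <;> intro h
    · exact hd1 (mkLine_inj p hp0 h).2
    · exact h12 (mkLine_inj p hp0 h).1
    · exact h12 (mkLine_inj p hp0 h).1.symm
    · exact htB2 (mkLine_inj p hp0 h).2
    · exact hσ1 (mkLine_inj p hp0 h).1
    · exact hσ2 (mkLine_inj p hp0 h).1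
  · refine ⟨?_, ?_, ?_⟩
    · refine (mem_lineCells p hp0 d ℓ1 tA).mpr ?_
      rw [← hzd, ← htA]
    · intro h
      have h' := (mem_lineCells p hp0 d ℓ2 tB).mp h
      rw [← hzd] at h'
      exact htBd h'.symm
    · intro h
      have h' := (mem_lineCells p hp0 d σ tC).mp h
      rw [← hzd] at h'
      exact htCd h'
  · intro z hz
    have hz' := (mem_lineCells p hp0 z ℓ1 t1).mp hz
    constructor
    · intro h
      have h' := (mem_lineCells p hp0 z ℓ1 tA).mp h
      exact hd1 (h'.symm.trans hz')
    · rw [mem_lineCells p hp0 z ℓ2 tB, mem_lineCells p hp0 z σ tC]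
      constructor
      · intro h
        have hzz1 : toZ p z = z1 :=
          two_point p hp hp5 (Ne.symm h12) (h.trans htB) (hz'.trans hz1D1.symm)
        rw [hzz1, hz1C]
      · intro h
        have hzz1 : toZ p z = z1 :=
          two_point p hp hp5 hσ1 (h.trans hz1C.symm) (hz'.trans hz1D1.symm)
        rw [hzz1]
  · intro z hz
    have hz' := (mem_lineCells p hp0 z ℓ2 t2).mp hz
    constructor
    · intro h
      have h' := (mem_lineCells p hp0 z ℓ2 tB).mp h
      exact htB2 (h'.symm.trans hz')
    · rw [mem_lineCells p hp0 z ℓ1 tA, mem_lineCells p hp0 z σ tC]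
      constructor
      · intro h
        have hzz2 : toZ p z = z2 :=
          two_point p hp hp5 h12 (h.trans hz2A.symm) (hz'.trans hz2D2.symm)
        rw [hzz2]
      · intro h
        have hzz2 : toZ p z = z2 :=
          two_point p hp hp5 hσ2 (h.trans htC) (hz'.trans hz2D2.symm)
        rw [hzz2]
        exact hz2A


def Good (req : Fin 5 → Cell p) : Prop :=
  ∃ R : Fin 5 → Finset (Coords p),
    (∀ a b, a ≠ b → Disjoint (R a) (R b)) ∧
    ∀ a, ∀ x x' : Cell p → ZMod 2,
      (∀ c ∈ R a, ext5Encode p x c = ext5Encode p x' c) → x (req a) = x' (req a)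

lemma good_of (req : Fin 5 → Cell p) (𝓛 : Fin 5 → Finset (Fin 5 × Fin p))
    (hdisj : ∀ a b, a ≠ b → Disjoint (𝓛 a) (𝓛 b) ∧
      Disjoint (covOdd p (𝓛 a) (req a)) (covOdd p (𝓛 b) (req b))) : Good p req := by
  refine ⟨fun a => Rset p (𝓛 a) (req a), fun a b hab => ?_, fun a x x' h => ?_⟩
  · exact disjoint_Rset p _ _ _ _ (hdisj a b hab).1 (hdisj a b hab).2
  · exact Rset_recovers p (𝓛 a) (req a) x x' h

def nthSlope (S : Finset (Fin 5)) (j : ℕ) : Fin 5 :=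
  if h : j < S.card then S.orderEmbOfCardLe (le_refl _) ⟨j, h⟩ else 0

lemma nthSlope_mem (S : Finset (Fin 5)) {j : ℕ} (h : j < S.card) : nthSlope S j ∈ S := by
  rw [nthSlope, dif_pos h]
  exact Finset.orderEmbOfCardLe_mem _ _ _

lemma nthSlope_inj (S : Finset (Fin 5)) {j j' : ℕ} (h : j < S.card) (h' : j' < S.card)
    (hjj : j ≠ j') : nthSlope S j ≠ nthSlope S j' := by
  rw [nthSlope, dif_pos h, nthSlope, dif_pos h']
  intro hc
  have := (S.orderEmbOfCardLe (le_refl _)).injective hc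
  rw [Fin.mk.injEq] at this
  exact hjj this

section Pairs

variable (hp0 : p ≠ 0) (req : Fin 5 → Cell p)

lemma allowed_congr {a b : Fin 5} (h : req a = req b) :
    Forb p req a = Forb p req b := by
  unfold Forb
  apply Finset.filter_congr
  intro ℓ _
  rw [h]

lemma L_ee {u1 u2 : Cell p} (h : u1 ≠ u2) :
    Disjoint (covOdd p ∅ u1) (covOdd p ∅ u2) := by
  rw [Finset.disjoint_left]
  intro c hc1 hc2
  rw [mem_covOdd_empty] at hc1 hc2
  exact h (hc1 ▸ hc2)

lemma L_es (a b : Fin 5) (ℓ : Fin 5) (hℓ : ℓ ∉ Forb p req b) :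
    Disjoint (covOdd p ∅ (req a)) (covOdd p {lineThru p hp0 ℓ (req b)} (req b)) := by
  rw [Finset.disjoint_left]
  intro c hc1 hc2
  rw [mem_covOdd_empty] at hc1
  rw [mem_covOdd_single p _ _ (self_mem_lineThru p hp0 ℓ (req b))] at hc2
  subst hc1
  apply hℓ
  rw [Forb, Finset.mem_filter]
  exact ⟨Finset.mem_univ _, a, hc2.2, (mem_lineThru p hp0 ℓ (req b) (req a)).mp hc2.1⟩

lemma L_ss_same (hp : p.Prime) (hp5 : 5 ≤ p) (u : Cell p) {ℓ ℓ' : Fin 5} (h : ℓ ≠ ℓ') :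
    Disjoint (covOdd p {lineThru p hp0 ℓ u} u) (covOdd p {lineThru p hp0 ℓ' u} u) := by
  rw [Finset.disjoint_left]
  intro c hc1 hc2
  rw [mem_covOdd_single p _ _ (self_mem_lineThru p hp0 ℓ u)] at hc1
  rw [mem_covOdd_single p _ _ (self_mem_lineThru p hp0 ℓ' u)] at hc2
  apply hc1.2
  apply toZ_inj
  exact two_point p hp hp5 h ((mem_lineThru p hp0 ℓ u c).mp hc1.1)
    ((mem_lineThru p hp0 ℓ' u c).mp hc2.1)

lemma L_ss_par (u1 u2 : Cell p) (ℓ : Fin 5)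
    (hne : key p ℓ (toZ p u1) ≠ key p ℓ (toZ p u2)) :
    Disjoint (covOdd p {lineThru p hp0 ℓ u1} u1) (covOdd p {lineThru p hp0 ℓ u2} u2) := by
  rw [Finset.disjoint_left]
  intro c hc1 hc2
  rw [mem_covOdd_single p _ _ (self_mem_lineThru p hp0 ℓ u1)] at hc1
  rw [mem_covOdd_single p _ _ (self_mem_lineThru p hp0 ℓ u2)] at hc2
  exact hne (((mem_lineThru p hp0 ℓ u1 c).mp hc1.1).symm.trans
    ((mem_lineThru p hp0 ℓ u2 c).mp hc2.1))

end Pairs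

lemma caseA (hp : p.Prime) (hp5 : 5 ≤ p) (hp0 : p ≠ 0) (req : Fin 5 → Cell p)
    (hA : ∀ a b, 0 < kIdx p req a → 0 < kIdx p req b → req a = req b) : Good p req := by
  have hcard : ∀ a : Fin 5, kIdx p req a < (Allowed p req a).card := by
    intro a
    have h1 := forb_card_fib p req hp hp5 a
    have h2 := kIdx_lt_fib p req a
    have h3 : (Allowed p req a).card = 5 - (Forb p req a).card := by
      rw [Allowed, Finset.card_sdiff_of_subset (Finset.subset_univ _)]
      simp
    omega
  apply good_of p req (fun a =>
    if 0 < kIdx p req a then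
      {lineThru p hp0 (nthSlope (Allowed p req a) (kIdx p req a - 1)) (req a)} else ∅)
  intro a b hab
  by_cases ha : 0 < kIdx p req a <;> by_cases hb : 0 < kIdx p req b <;>
    simp only [if_pos, if_neg, ha, hb, if_true, if_false]
  · -- both positive
    have hcell : req a = req b := hA a b ha hb
    have hall : Allowed p req b = Allowed p req a := by
      unfold Allowed
      rw [allowed_congr p req hcell]
    rw [hall]
    have hja : kIdx p req a - 1 < (Allowed p req a).card := by have := hcard a; omega
    have hjb : kIdx p req b - 1 < (Allowed p req a).card := by
      have := hcard b; rw [hall] at this; omega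
    have hkne := kIdx_ne p req a b hab hcell
    have hslope : nthSlope (Allowed p req a) (kIdx p req a - 1)
        ≠ nthSlope (Allowed p req a) (kIdx p req b - 1) :=
      nthSlope_inj _ hja hjb (by omega)
    constructor
    · rw [Finset.disjoint_singleton]
      intro hc
      exact hslope (mkLine_inj p hp0 hc).1
    · rw [← hcell]
      exact L_ss_same p hp0 hp hp5 (req a) hslope
  · -- a positive, b zero
    refine ⟨Finset.disjoint_empty_right _, ?_⟩
    have hm := nthSlope_mem (Allowed p req a) (by have := hcard a; omega :
      kIdx p req a - 1 < (Allowed p req a).card)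
    rw [Allowed, Finset.mem_sdiff] at hm
    exact (L_es p hp0 req b a _ hm.2).symm
  · -- a zero, b positive
    refine ⟨Finset.disjoint_empty_left _, ?_⟩
    have hm := nthSlope_mem (Allowed p req b) (by have := hcard b; omega :
      kIdx p req b - 1 < (Allowed p req b).card)
    rw [Allowed, Finset.mem_sdiff] at hm
    exact L_es p hp0 req a b _ hm.2
  · -- both zero
    refine ⟨Finset.disjoint_empty_left _, ?_⟩
    apply L_ee
    intro hcell
    exact kIdx_ne p req a b hab hcell (by omega)

lemma caseB (hp : p.Prime) (hp5 : 5 ≤ p) (hp0 : p ≠ 0) (req : Fin 5 → Cell p)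
    (a1 a2 : Fin 5) (h1 : 0 < kIdx p req a1) (h2 : 0 < kIdx p req a2)
    (hcell : req a1 ≠ req a2) (honly : ∀ a, 0 < kIdx p req a → a = a1 ∨ a = a2) :
    Good p req := by
  have ha12 : a1 ≠ a2 := fun h => hcell (h ▸ rfl)
  have hEset : Finset.univ.filter (fun a => 0 < kIdx p req a) = {a1, a2} := by
    ext a
    rw [Finset.mem_filter, Finset.mem_insert, Finset.mem_singleton]
    constructor
    · intro h
      exact honly a h.2
    · rintro (rfl | rfl)
      · exact ⟨Finset.mem_univ _, h1⟩
      · exact ⟨Finset.mem_univ _, h2⟩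
  have hr : (Finset.univ.image req).card ≤ 3 := by
    apply r_le
    rw [hEset, Finset.card_insert_of_notMem (by simpa using ha12), Finset.card_singleton]
  have hforb : ∀ a, (Forb p req a).card ≤ 2 := by
    intro a
    have := forb_card_r p req hp hp5 a
    omega
  have hgood : (Finset.univ \ (Forb p req a1 ∪ Forb p req a2)).Nonempty := by
    rw [← Finset.card_pos, Finset.card_sdiff_of_subset (Finset.subset_univ _)]
    have h3 := Finset.card_union_le (Forb p req a1) (Forb p req a2)
    have h4 := hforb a1
    have h5 := hforb a2
    simp only [Finset.card_univ, Fintype.card_fin]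
    omega
  obtain ⟨ℓ, hℓ⟩ := hgood
  rw [Finset.mem_sdiff, Finset.mem_union] at hℓ
  push_neg at hℓ
  obtain ⟨-, hℓ1, hℓ2⟩ := hℓ
  have hFa : ∀ a, 0 < kIdx p req a → ℓ ∉ Forb p req a := by
    intro a ha
    rcases honly a ha with rfl | rfl
    · exact hℓ1
    · exact hℓ2
  have hkey : ∀ a b, 0 < kIdx p req a → req b ≠ req a →
      key p ℓ (toZ p (req b)) ≠ key p ℓ (toZ p (req a)) := by
    intro a b ha hne hk
    apply hFa a ha
    rw [Forb, Finset.mem_filter]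
    exact ⟨Finset.mem_univ _, b, hne, hk⟩
  apply good_of p req (fun a =>
    if 0 < kIdx p req a then {lineThru p hp0 ℓ (req a)} else ∅)
  intro a b hab
  by_cases ha : 0 < kIdx p req a <;> by_cases hb : 0 < kIdx p req b <;>
    simp only [if_pos, if_neg, ha, hb, if_true, if_false]
  · -- both positive: a, b are a1, a2 in some order, cells differ
    have hrr : req a ≠ req b := by
      rcases honly a ha with rfl | rfl <;> rcases honly b hb with rfl | rfl
      · exact absurd rfl hab
      · exact hcell
      · exact hcell.symm
      · exact absurd rfl hab
    have hk : key p ℓ (toZ p (req a)) ≠ key p ℓ (toZ p (req b)) :=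
      hkey b a hb hrr
    constructor
    · rw [Finset.disjoint_singleton]
      intro hc
      exact hk (mkLine_inj p hp0 hc).2
    · exact L_ss_par p hp0 (req a) (req b) ℓ hk
  · refine ⟨Finset.disjoint_empty_right _, ?_⟩
    exact (L_es p hp0 req b a ℓ (hFa a ha)).symm
  · refine ⟨Finset.disjoint_empty_left _, ?_⟩
    exact L_es p hp0 req a b ℓ (hFa b hb)
  · refine ⟨Finset.disjoint_empty_left _, ?_⟩
    apply L_ee
    intro hc
    exact kIdx_ne p req a b hab hc (by omega)

lemma caseC (hp : p.Prime) (hp5 : 5 ≤ p) (hp0 : p ≠ 0) (req : Fin 5 → Cell p)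
    (e1 e2 e3 : Fin 5) (h12 : e1 ≠ e2) (h13 : e1 ≠ e3) (h23 : e2 ≠ e3)
    (hc2 : req e2 = req e1) (hd : req e3 ≠ req e1)
    (hall : ∀ a, req a = req e1 ∨ req a = req e3)
    (hk0 : ∀ a, a ≠ e1 → a ≠ e2 → a ≠ e3 → kIdx p req a = 0) : Good p req := by
  have hcd : req e1 ≠ req e3 := fun h => hd h.symm
  have himg : (Finset.univ.image req).card ≤ 2 := by
    have hsub : Finset.univ.image req ⊆ {req e1, req e3} := by
      intro y hy
      obtain ⟨a, -, rfl⟩ := Finset.mem_image.mp hy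
      rcases hall a with h | h <;> rw [h] <;> simp
    refine (Finset.card_le_card hsub).trans ?_
    refine (Finset.card_insert_le _ _).trans ?_
    simp
  have hforb1 : (Forb p req e1).card ≤ 1 := by
    have := forb_card_r p req hp hp5 e1
    omega
  have htwo : 1 < (Finset.univ \ Forb p req e1).card := by
    rw [Finset.card_sdiff_of_subset (Finset.subset_univ _)]
    simp only [Finset.card_univ, Fintype.card_fin]
    omega
  obtain ⟨ℓ1, hm1, ℓ2, hm2, h12s⟩ := Finset.one_lt_card.mp htwo
  have hℓ1F : ℓ1 ∉ Forb p req e1 := (Finset.mem_sdiff.mp hm1).2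
  have hℓ2F : ℓ2 ∉ Forb p req e1 := (Finset.mem_sdiff.mp hm2).2
  have hkey1 : key p ℓ1 (toZ p (req e3)) ≠ key p ℓ1 (toZ p (req e1)) := by
    intro h
    apply hℓ1F
    rw [Forb, Finset.mem_filter]
    exact ⟨Finset.mem_univ _, e3, hd, h⟩
  have hkey2 : key p ℓ2 (toZ p (req e3)) ≠ key p ℓ2 (toZ p (req e1)) := by
    intro h
    apply hℓ2F
    rw [Forb, Finset.mem_filter]
    exact ⟨Finset.mem_univ _, e3, hd, h⟩
  obtain ⟨A, B, C, ⟨hAB, hAC, hBC⟩, ⟨hA1, hA2, hB1, hB2, hC1, hC2⟩, ⟨hdA, hdB, hdC⟩,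
    hD1f, hD2f⟩ := gadget p hp hp5 hp0 (req e1) (req e3) hcd ℓ1 ℓ2 h12s hkey1 hkey2
  have hd1' : req e3 ∉ lineCells p (lineThru p hp0 ℓ1 (req e1)) := by
    intro h
    exact hkey1 ((mem_lineThru p hp0 ℓ1 (req e1) (req e3)).mp h)
  have hd2' : req e3 ∉ lineCells p (lineThru p hp0 ℓ2 (req e1)) := by
    intro h
    exact hkey2 ((mem_lineThru p hp0 ℓ2 (req e1) (req e3)).mp h)
  have G1 : ∀ z ∈ lineCells p (lineThru p hp0 ℓ1 (req e1)),
      z ∉ covOdd p {A, B, C} (req e3) := by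
    intro z hz hcov
    rw [mem_covOdd_triple p A B C hAB hAC hBC] at hcov
    obtain ⟨hzA, hziff⟩ := hD1f z hz
    have hzd : z ≠ req e3 := fun h => hd1' (h ▸ hz)
    rw [if_neg hzA, if_neg hzd] at hcov
    by_cases hzB : z ∈ lineCells p B
    · rw [if_pos hzB, if_pos (hziff.mp hzB)] at hcov
      exact absurd hcov (by decide)
    · rw [if_neg hzB, if_neg (fun h => hzB (hziff.mpr h))] at hcov
      exact absurd hcov (by decide)
  have G2 : ∀ z ∈ lineCells p (lineThru p hp0 ℓ2 (req e1)),
      z ∉ covOdd p {A, B, C} (req e3) := by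
    intro z hz hcov
    rw [mem_covOdd_triple p A B C hAB hAC hBC] at hcov
    obtain ⟨hzB, hziff⟩ := hD2f z hz
    have hzd : z ≠ req e3 := fun h => hd2' (h ▸ hz)
    rw [if_neg hzB, if_neg hzd] at hcov
    by_cases hzA : z ∈ lineCells p A
    · rw [if_pos hzA, if_pos (hziff.mp hzA)] at hcov
      exact absurd hcov (by decide)
    · rw [if_neg hzA, if_neg (fun h => hzA (hziff.mpr h))] at hcov
      exact absurd hcov (by decide)
  have Gd : req e3 ∉ covOdd p {A, B, C} (req e3) := by
    intro hcov
    rw [mem_covOdd_triple p A B C hAB hAC hBC] at hcov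
    rw [if_pos hdA, if_neg hdB, if_neg hdC, if_pos rfl] at hcov
    exact absurd hcov (by decide)
  -- the ordered pair facts
  have P12 : Disjoint ({lineThru p hp0 ℓ1 (req e1)} : Finset (Fin 5 × Fin p))
        {lineThru p hp0 ℓ2 (req e1)} ∧
      Disjoint (covOdd p {lineThru p hp0 ℓ1 (req e1)} (req e1))
        (covOdd p {lineThru p hp0 ℓ2 (req e1)} (req e2)) := by
    constructor
    · rw [Finset.disjoint_singleton]
      intro h
      exact h12s (mkLine_inj p hp0 h).1
    · rw [hc2]
      exact L_ss_same p hp0 hp hp5 (req e1) h12s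
  have P13 : Disjoint ({lineThru p hp0 ℓ1 (req e1)} : Finset (Fin 5 × Fin p)) {A, B, C} ∧
      Disjoint (covOdd p {lineThru p hp0 ℓ1 (req e1)} (req e1))
        (covOdd p {A, B, C} (req e3)) := by
    constructor
    · rw [Finset.disjoint_left]
      intro x hx1 hx2
      rw [Finset.mem_singleton] at hx1
      subst hx1
      rw [Finset.mem_insert, Finset.mem_insert, Finset.mem_singleton] at hx2
      rcases hx2 with h | h | h
      · exact hA1 h.symm
      · exact hB1 h.symm
      · exact hC1 h.symm
    · rw [Finset.disjoint_left]
      intro z hz1 hz2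
      rw [mem_covOdd_single p _ _ (self_mem_lineThru p hp0 ℓ1 (req e1))] at hz1
      exact G1 z hz1.1 hz2
  have P23 : Disjoint ({lineThru p hp0 ℓ2 (req e1)} : Finset (Fin 5 × Fin p)) {A, B, C} ∧
      Disjoint (covOdd p {lineThru p hp0 ℓ2 (req e1)} (req e2))
        (covOdd p {A, B, C} (req e3)) := by
    constructor
    · rw [Finset.disjoint_left]
      intro x hx1 hx2
      rw [Finset.mem_singleton] at hx1
      subst hx1
      rw [Finset.mem_insert, Finset.mem_insert, Finset.mem_singleton] at hx2
      rcases hx2 with h | h | h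
      · exact hA2 h.symm
      · exact hB2 h.symm
      · exact hC2 h.symm
    · rw [hc2, Finset.disjoint_left]
      intro z hz1 hz2
      rw [mem_covOdd_single p _ _ (self_mem_lineThru p hp0 ℓ2 (req e1))] at hz1
      exact G2 z hz1.1 hz2
  have P1o : ∀ b, b ≠ e1 → b ≠ e2 → b ≠ e3 →
      Disjoint ({lineThru p hp0 ℓ1 (req e1)} : Finset (Fin 5 × Fin p)) (∅ : Finset (Fin 5 × Fin p)) ∧
      Disjoint (covOdd p {lineThru p hp0 ℓ1 (req e1)} (req e1)) (covOdd p ∅ (req b)) := by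
    intro b _ _ _
    exact ⟨Finset.disjoint_empty_right _, (L_es p hp0 req b e1 ℓ1 hℓ1F).symm⟩
  have P2o : ∀ b, b ≠ e1 → b ≠ e2 → b ≠ e3 →
      Disjoint ({lineThru p hp0 ℓ2 (req e1)} : Finset (Fin 5 × Fin p)) (∅ : Finset (Fin 5 × Fin p)) ∧
      Disjoint (covOdd p {lineThru p hp0 ℓ2 (req e1)} (req e2)) (covOdd p ∅ (req b)) := by
    intro b _ _ _
    refine ⟨Finset.disjoint_empty_right _, ?_⟩
    rw [hc2]
    exact (L_es p hp0 req b e1 ℓ2 hℓ2F).symm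
  have P3o : ∀ b, b ≠ e1 → b ≠ e2 → b ≠ e3 →
      Disjoint ({A, B, C} : Finset (Fin 5 × Fin p)) (∅ : Finset (Fin 5 × Fin p)) ∧
      Disjoint (covOdd p {A, B, C} (req e3)) (covOdd p ∅ (req b)) := by
    intro b _ _ _
    refine ⟨Finset.disjoint_empty_right _, ?_⟩
    rw [Finset.disjoint_right]
    intro z hz
    rw [mem_covOdd_empty] at hz
    subst hz
    rcases hall b with h | h
    · apply G1
      rw [mem_lineThru, h]
    · rw [h]
      exact Gd
  have Poo : ∀ a b, a ≠ e1 → a ≠ e2 → a ≠ e3 → b ≠ e1 → b ≠ e2 → b ≠ e3 → a ≠ b →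
      Disjoint (∅ : Finset (Fin 5 × Fin p)) (∅ : Finset (Fin 5 × Fin p)) ∧
      Disjoint (covOdd p ∅ (req a)) (covOdd p ∅ (req b)) := by
    intro a b ha1 ha2 ha3 hb1 hb2 hb3 hab
    refine ⟨Finset.disjoint_empty_left _, ?_⟩
    apply L_ee
    intro hcell
    have hka := hk0 a ha1 ha2 ha3
    have hkb := hk0 b hb1 hb2 hb3
    exact kIdx_ne p req a b hab hcell (by omega)
  apply good_of p req (fun a =>
    if a = e1 then {lineThru p hp0 ℓ1 (req e1)}
    else if a = e2 then {lineThru p hp0 ℓ2 (req e1)}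
    else if a = e3 then {A, B, C} else ∅)
  intro a b hab
  have hsym : ∀ {X1 Y1 : Finset (Fin 5 × Fin p)} {X2 Y2 : Finset (Cell p)},
      (Disjoint X1 Y1 ∧ Disjoint X2 Y2) → (Disjoint Y1 X1 ∧ Disjoint Y2 X2) :=
    fun h => ⟨h.1.symm, h.2.symm⟩
  by_cases ha1 : a = e1
  · rw [ha1, if_pos rfl]
    by_cases hb2 : b = e2
    · rw [hb2, if_neg (Ne.symm h12), if_pos rfl]
      exact P12
    · by_cases hb3 : b = e3
      · rw [hb3, if_neg (Ne.symm h13), if_neg (Ne.symm h23), if_pos rfl]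
        exact P13
      · have hb1 : b ≠ e1 := fun h => hab (ha1.trans h.symm)
        rw [if_neg hb1, if_neg hb2, if_neg hb3]
        exact P1o b hb1 hb2 hb3
  · by_cases ha2 : a = e2
    · rw [ha2, if_neg (Ne.symm h12), if_pos rfl]
      by_cases hb1 : b = e1
      · rw [hb1, if_pos rfl]
        exact hsym P12
      · by_cases hb3 : b = e3
        · rw [hb3, if_neg (Ne.symm h13), if_neg (Ne.symm h23), if_pos rfl]
          exact P23
        · have hb2 : b ≠ e2 := fun h => hab (ha2.trans h.symm)
          rw [if_neg hb1, if_neg hb2, if_neg hb3]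
          exact P2o b hb1 hb2 hb3
    · by_cases ha3 : a = e3
      · rw [ha3, if_neg (Ne.symm h13), if_neg (Ne.symm h23), if_pos rfl]
        by_cases hb1 : b = e1
        · rw [hb1, if_pos rfl]
          exact hsym P13
        · by_cases hb2 : b = e2
          · rw [hb2, if_neg (Ne.symm h12), if_pos rfl]
            exact hsym P23
          · have hb3 : b ≠ e3 := fun h => hab (ha3.trans h.symm)
            rw [if_neg hb1, if_neg hb2, if_neg hb3]
            exact P3o b hb1 hb2 hb3
      · rw [if_neg ha1, if_neg ha2, if_neg ha3]
        by_cases hb1 : b = e1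
        · rw [hb1, if_pos rfl]
          exact hsym (P1o a ha1 ha2 ha3)
        · by_cases hb2 : b = e2
          · rw [hb2, if_neg (Ne.symm h12), if_pos rfl]
            exact hsym (P2o a ha1 ha2 ha3)
          · by_cases hb3 : b = e3
            · rw [hb3, if_neg (Ne.symm h13), if_neg (Ne.symm h23), if_pos rfl]
              exact hsym (P3o a ha1 ha2 ha3)
            · rw [if_neg hb1, if_neg hb2, if_neg hb3]
              exact Poo a b ha1 ha2 ha3 hb1 hb2 hb3 hab

lemma main (hp : p.Prime) (hp5 : 5 ≤ p) (req : Fin 5 → Cell p) : Good p req := by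
  have hp0 : p ≠ 0 := hp.ne_zero
  by_cases hA : ∀ a b, 0 < kIdx p req a → 0 < kIdx p req b → req a = req b
  · exact caseA p hp hp5 hp0 req hA
  push_neg at hA
  obtain ⟨a1, a2, h1, h2, hcell⟩ := hA
  obtain ⟨b1, hb1k, hb1c⟩ := exists_rep p req a1
  obtain ⟨b2, hb2k, hb2c⟩ := exists_rep p req a2
  have hb12 : b1 ≠ b2 := by
    intro h
    exact hcell (hb1c.symm.trans (h ▸ hb2c))
  have hext : ∀ a, 0 < kIdx p req a → req a = req a1 ∨ req a = req a2 := by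
    intro a ha
    by_contra hcon
    push_neg at hcon
    obtain ⟨hc1, hc2⟩ := hcon
    have hdj1 : Disjoint (fib p req a) (fib p req a1) := by
      rw [Finset.disjoint_left]
      intro z hz hz'
      rw [mem_fib] at hz hz'
      exact hc1 (hz.symm.trans hz')
    have hdj2 : Disjoint (fib p req a ∪ fib p req a1) (fib p req a2) := by
      rw [Finset.disjoint_union_left]
      constructor <;> rw [Finset.disjoint_left] <;> intro z hz hz' <;>
        rw [mem_fib] at hz hz'
      · exact hc2 (hz.symm.trans hz')
      · exact hcell (hz.symm.trans hz')
    have hle : (fib p req a ∪ fib p req a1 ∪ fib p req a2).card ≤ 5 := by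
      refine le_trans (Finset.card_le_card (Finset.subset_univ _)) ?_
      simp
    rw [Finset.card_union_of_disjoint hdj2, Finset.card_union_of_disjoint hdj1] at hle
    have q1 := kIdx_lt_fib p req a
    have q2 := kIdx_lt_fib p req a1
    have q3 := kIdx_lt_fib p req a2
    omega
  set E1 := Finset.univ.filter (fun b => 0 < kIdx p req b ∧ req b = req a1) with hE1def
  set E2 := Finset.univ.filter (fun b => 0 < kIdx p req b ∧ req b = req a2) with hE2def
  have hmem1 : ∀ b, b ∈ E1 ↔ (0 < kIdx p req b ∧ req b = req a1) := by
    intro b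
    rw [hE1def, Finset.mem_filter]
    simp
  have hmem2 : ∀ b, b ∈ E2 ↔ (0 < kIdx p req b ∧ req b = req a2) := by
    intro b
    rw [hE2def, Finset.mem_filter]
    simp
  have ha1E : a1 ∈ E1 := (hmem1 a1).mpr ⟨h1, rfl⟩
  have ha2E : a2 ∈ E2 := (hmem2 a2).mpr ⟨h2, rfl⟩
  have hdisj12 : Disjoint E1 E2 := by
    rw [Finset.disjoint_left]
    intro z hz hz'
    rw [hmem1] at hz
    rw [hmem2] at hz'
    exact hcell (hz.2.symm.trans hz'.2)
  have hsub : E1 ∪ E2 ⊆ Finset.univ \ {b1, b2} := by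
    intro z hz
    rw [Finset.mem_sdiff, Finset.mem_insert, Finset.mem_singleton]
    refine ⟨Finset.mem_univ _, ?_⟩
    have hzpos : 0 < kIdx p req z := by
      rcases Finset.mem_union.mp hz with h | h
      · exact ((hmem1 z).mp h).1
      · exact ((hmem2 z).mp h).1
    rintro (rfl | rfl)
    · omega
    · omega
  have hcard3 : E1.card + E2.card ≤ 3 := by
    have hle := Finset.card_le_card hsub
    rw [Finset.card_union_of_disjoint hdisj12] at hle
    rw [Finset.card_sdiff_of_subset (Finset.subset_univ _)] at hle
    have : ({b1, b2} : Finset (Fin 5)).card = 2 := by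
      rw [Finset.card_insert_of_notMem (by simpa using hb12), Finset.card_singleton]
    simp only [Finset.card_univ, Fintype.card_fin] at hle
    omega
  have hc1pos : 1 ≤ E1.card := Finset.card_pos.mpr ⟨a1, ha1E⟩
  have hc2pos : 1 ≤ E2.card := Finset.card_pos.mpr ⟨a2, ha2E⟩
  have hEeq : Finset.univ.filter (fun a => 0 < kIdx p req a) = E1 ∪ E2 := by
    ext a
    rw [Finset.mem_filter, Finset.mem_union, hmem1, hmem2]
    constructor
    · intro h
      rcases hext a h.2 with hc | hc
      · exact Or.inl ⟨h.2, hc⟩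
      · exact Or.inr ⟨h.2, hc⟩
    · rintro (h | h) <;> exact ⟨Finset.mem_univ _, h.1⟩
  have hEmem : ∀ a, 0 < kIdx p req a → a ∈ E1 ∪ E2 := by
    intro a ha
    rw [← hEeq, Finset.mem_filter]
    exact ⟨Finset.mem_univ _, ha⟩
  -- the k=0 set is {b1, b2} when there are 3 extras
  have hk0set : E1.card + E2.card = 3 →
      Finset.univ.filter (fun a => ¬ 0 < kIdx p req a) = {b1, b2} := by
    intro hc
    have hpart := Finset.card_filter_add_card_filter_not
      (s := (Finset.univ : Finset (Fin 5))) (p := fun a => 0 < kIdx p req a)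
    rw [hEeq, Finset.card_union_of_disjoint hdisj12] at hpart
    simp only [Finset.card_univ, Fintype.card_fin] at hpart
    have hsub2 : ({b1, b2} : Finset (Fin 5)) ⊆
        Finset.univ.filter (fun a => ¬ 0 < kIdx p req a) := by
      intro z hz
      rw [Finset.mem_insert, Finset.mem_singleton] at hz
      rw [Finset.mem_filter]
      rcases hz with rfl | rfl
      · exact ⟨Finset.mem_univ _, by omega⟩
      · exact ⟨Finset.mem_univ _, by omega⟩
    have hcards : ({b1, b2} : Finset (Fin 5)).card = 2 := by
      rw [Finset.card_insert_of_notMem (by simpa using hb12), Finset.card_singleton]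
    exact (Finset.eq_of_subset_of_card_le hsub2 (by omega)).symm
  have hE1le : E1.card ≤ 2 := by omega
  have hE2le : E2.card ≤ 2 := by omega
  rcases (by omega : E1.card = 1 ∧ E2.card = 1 ∨ E1.card = 2 ∨ E2.card = 2) with
    ⟨hE1c, hE2c⟩ | hE1c | hE2c
  · -- (1,1) : case B
    apply caseB p hp hp5 hp0 req a1 a2 h1 h2 hcell
    intro a ha
    obtain ⟨x1, hx1⟩ := Finset.card_eq_one.mp hE1c
    obtain ⟨x2, hx2⟩ := Finset.card_eq_one.mp hE2c
    have hxa1 : x1 = a1 := (Finset.mem_singleton.mp (hx1 ▸ ha1E)).symm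
    have hxa2 : x2 = a2 := (Finset.mem_singleton.mp (hx2 ▸ ha2E)).symm
    rcases Finset.mem_union.mp (hEmem a ha) with h | h
    · exact Or.inl ((Finset.mem_singleton.mp (hx1 ▸ h)).trans hxa1)
    · exact Or.inr ((Finset.mem_singleton.mp (hx2 ▸ h)).trans hxa2)
  · -- E1.card = 2 : case C with heavy cell req a1
    have hE2c : E2.card = 1 := by omega
    obtain ⟨y1, y2, hy12, hy⟩ := Finset.card_eq_two.mp hE1c
    have hy1E : y1 ∈ E1 := by rw [hy]; simp
    have hy2E : y2 ∈ E1 := by rw [hy]; simp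
    obtain ⟨hy1k, hy1c⟩ := (hmem1 y1).mp hy1E
    obtain ⟨hy2k, hy2c⟩ := (hmem1 y2).mp hy2E
    have hk0s := hk0set (by omega)
    have hcell' : req a2 ≠ req y1 := by
      rw [hy1c]
      exact fun h => hcell h.symm
    have h13 : y1 ≠ a2 := by
      intro h
      rw [h] at hy1c
      exact hcell hy1c.symm
    have h23 : y2 ≠ a2 := by
      intro h
      apply hcell
      rw [← hy2c, h]
    refine caseC p hp hp5 hp0 req y1 y2 a2 hy12 h13 h23 (hy2c.trans hy1c.symm) hcell' ?_ ?_
    · intro a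
      by_cases ha : 0 < kIdx p req a
      · rcases hext a ha with hc | hc
        · exact Or.inl (hc.trans hy1c.symm)
        · exact Or.inr hc
      · have : a ∈ ({b1, b2} : Finset (Fin 5)) := by
          rw [← hk0s, Finset.mem_filter]
          exact ⟨Finset.mem_univ _, ha⟩
        rw [Finset.mem_insert, Finset.mem_singleton] at this
        rcases this with rfl | rfl
        · exact Or.inl ((hb1c.trans hy1c.symm))
        · exact Or.inr hb2c
    · intro a hna1 hna2 hna3
      by_contra hk
      have hapos : 0 < kIdx p req a := by omega
      rcases Finset.mem_union.mp (hEmem a hapos) with h | h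
      · rw [hy, Finset.mem_insert, Finset.mem_singleton] at h
        rcases h with rfl | rfl
        · exact hna1 rfl
        · exact hna2 rfl
      · obtain ⟨x2, hx2⟩ := Finset.card_eq_one.mp hE2c
        have hxa2 : x2 = a2 := (Finset.mem_singleton.mp (hx2 ▸ ha2E)).symm
        exact hna3 ((Finset.mem_singleton.mp (hx2 ▸ h)).trans hxa2)
  · -- E2.card = 2 : case C with heavy cell req a2
    have hE1c : E1.card = 1 := by omega
    obtain ⟨y1, y2, hy12, hy⟩ := Finset.card_eq_two.mp hE2c
    have hy1E : y1 ∈ E2 := by rw [hy]; simp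
    have hy2E : y2 ∈ E2 := by rw [hy]; simp
    obtain ⟨hy1k, hy1c⟩ := (hmem2 y1).mp hy1E
    obtain ⟨hy2k, hy2c⟩ := (hmem2 y2).mp hy2E
    have hk0s := hk0set (by omega)
    have hcell' : req a1 ≠ req y1 := by
      rw [hy1c]
      exact hcell
    have h13 : y1 ≠ a1 := by
      intro h
      rw [h] at hy1c
      exact hcell hy1c
    have h23 : y2 ≠ a1 := by
      intro h
      apply hcell
      rw [← hy2c, h]
    refine caseC p hp hp5 hp0 req y1 y2 a1 hy12 h13 h23 (hy2c.trans hy1c.symm) hcell' ?_ ?_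
    · intro a
      by_cases ha : 0 < kIdx p req a
      · rcases hext a ha with hc | hc
        · exact Or.inr hc
        · exact Or.inl (hc.trans hy1c.symm)
      · have : a ∈ ({b1, b2} : Finset (Fin 5)) := by
          rw [← hk0s, Finset.mem_filter]
          exact ⟨Finset.mem_univ _, ha⟩
        rw [Finset.mem_insert, Finset.mem_singleton] at this
        rcases this with rfl | rfl
        · exact Or.inr hb1c
        · exact Or.inl ((hb2c.trans hy1c.symm))
    · intro a hna1 hna2 hna3
      by_contra hk
      have hapos : 0 < kIdx p req a := by omega
      rcases Finset.mem_union.mp (hEmem a hapos) with h | h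
      · obtain ⟨x1, hx1⟩ := Finset.card_eq_one.mp hE1c
        have hxa1 : x1 = a1 := (Finset.mem_singleton.mp (hx1 ▸ ha1E)).symm
        exact hna3 ((Finset.mem_singleton.mp (hx1 ▸ h)).trans hxa1)
      · rw [hy, Finset.mem_insert, Finset.mem_singleton] at h
        rcases h with rfl | rfl
        · exact hna1 rfl
        · exact hna2 rfl

end Stmt19

/-- For a prime `p ≥ 5`, the binary code of dimension `p²` and length
`p² + 5p + 1` obtained from the array code `C(r = p, p, S = {0,1,2,3,4})` by appending a
global parity bit is a `5`-batch code: every multiset request of `5` information coordinates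
can be answered by `5` pairwise disjoint recovering sets.  In particular
`r_B(p², 5) ≤ 5p + 1`. -/
theorem stmt19 (p : ℕ) (hp : p.Prime) (hp5 : 5 ≤ p) :
    ∀ req : Fin 5 → Fin p × Fin p,
      ∃ R : Fin 5 → Finset ((Fin p × Fin p) ⊕ (Fin 5 × Fin p) ⊕ Unit),
        (∀ a b, a ≠ b → Disjoint (R a) (R b)) ∧
        ∀ a, ∀ x x' : Fin p × Fin p → ZMod 2,
          (∀ c ∈ R a, ext5Encode p x c = ext5Encode p x' c) →
          x (req a) = x' (req a) := by
  intro req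
  exact Stmt19.main p hp hp5 req
end
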